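/- arXiv:2509.26260 — 6 statements merged into one kernel-verified Lean document; each statement's English description precedes it below -/
import Mathlib

section
/- Let G be an Eulerian digraph and let X₁, X₂ ⊆ V(G) be disjoint vertex sets. Then for every natural number k, either there is a collection of pairwise edge-disjoint directed paths consisting of k paths from X₁ to X₂ and k paths from X₂ to X₁, or there is a partition (X, V∖X) of the vertices with X₁ ⊆ X, X₂ ⊆ V∖X and δ(X) < 2k. -/
structure MDigraph where
  V : Type
  E : Type
  [fintV : Fintype V]
  [fintE : Fintype E]
  [decV : DecidableEq V]
  [decE : DecidableEq E]
  tail : E → V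
  head : E → V

attribute [instance] MDigraph.fintV MDigraph.fintE MDigraph.decV MDigraph.decE

/-- An Eulerian digraph: every vertex has equal in-degree and out-degree. -/
def MDigraph.Eulerian (G : MDigraph) : Prop :=
  ∀ v : G.V, Nat.card {e : G.E // G.head e = v} = Nat.card {e : G.E // G.tail e = v}

/-- A directed trail: a nonempty walk without repeated edges. -/
structure MDigraph.Trail (G : MDigraph) : Type where
  edges : List G.E
  nonempty : edges ≠ []
  chain : edges.Chain' (fun e f => G.head e = G.tail f)
  nodup : edges.Nodup

def MDigraph.Trail.first {G : MDigraph} (t : G.Trail) : G.V :=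
  G.tail (t.edges.head t.nonempty)

def MDigraph.Trail.last {G : MDigraph} (t : G.Trail) : G.V :=
  G.head (t.edges.getLast t.nonempty)

/-- The internal vertices of a trail, in order. -/
def MDigraph.Trail.internals {G : MDigraph} (t : G.Trail) : List G.V :=
  t.edges.dropLast.map G.head

namespace MAux
open Finset
variable {G : MDigraph}

/-- out-count of a finset of edges at v, as an integer -/
def outZ (F : Finset G.E) (v : G.V) : ℤ := ((F.filter (fun e => G.tail e = v)).card : ℤ)
def inZ (F : Finset G.E) (v : G.V) : ℤ := ((F.filter (fun e => G.head e = v)).card : ℤ)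
def exZ (F : Finset G.E) (v : G.V) : ℤ := outZ F v - inZ F v

/-- out-count of a list of edges at v -/
def ctl (l : List G.E) (v : G.V) : ℤ := ((l.filter (fun e => decide (G.tail e = v))).length : ℤ)
def chd (l : List G.E) (v : G.V) : ℤ := ((l.filter (fun e => decide (G.head e = v))).length : ℤ)

lemma ctl_cons (e : G.E) (l : List G.E) (v : G.V) :
    ctl (e :: l) v = (if G.tail e = v then 1 else 0) + ctl l v := by
  simp [ctl, List.filter_cons]; split_ifs <;> simp <;> omega

lemma chd_cons (e : G.E) (l : List G.E) (v : G.V) :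
    chd (e :: l) v = (if G.head e = v then 1 else 0) + chd l v := by
  simp [chd, List.filter_cons]; split_ifs <;> simp <;> omega

lemma list_balance : ∀ (l : List G.E) (h : l ≠ [])
    (_ : l.Chain' (fun e f => G.head e = G.tail f)) (v : G.V),
    ctl l v - chd l v =
      (if G.tail (l.head h) = v then (1:ℤ) else 0) -
      (if G.head (l.getLast h) = v then (1:ℤ) else 0)
  | [], h, _, _ => absurd rfl h
  | [e], _, _, v => by
    simp only [List.head_cons, List.getLast_singleton]
    rw [ctl_cons e [], chd_cons e []]
    simp [ctl, chd]; split_ifs <;> simp_all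
  | e :: f :: l, _, hch, v => by
    have hef : G.head e = G.tail f := hch.rel_head
    have ih := list_balance (f :: l) (by simp) hch.tail v
    rw [List.head_cons, List.getLast_cons (by simp), ctl_cons, chd_cons]
    rw [List.head_cons, ← hef] at ih
    omega


lemma filter_sdiff_Z (F S : Finset G.E) (h : S ⊆ F) (p : G.E → Prop) [DecidablePred p] :
    ((((F \ S).filter p).card : ℤ)) = ((F.filter p).card : ℤ) - ((S.filter p).card : ℤ) := by
  have he : (F \ S).filter p = F.filter p \ S.filter p := by
    ext e; simp only [mem_filter, mem_sdiff]; tauto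
  have hsub : S.filter p ⊆ F.filter p := filter_subset_filter _ h
  rw [he, card_sdiff_of_subset hsub]
  exact_mod_cast Nat.cast_sub (card_le_card hsub)

lemma filter_union_Z (F S : Finset G.E) (h : Disjoint F S) (p : G.E → Prop) [DecidablePred p] :
    ((((F ∪ S).filter p).card : ℤ)) = ((F.filter p).card : ℤ) + ((S.filter p).card : ℤ) := by
  rw [filter_union, card_union_of_disjoint (disjoint_filter_filter h)]
  push_cast; ring

lemma list_count_eq (l : List G.E) (hn : l.Nodup) (p : G.E → Prop) [DecidablePred p] :
    ((l.filter (fun e => decide (p e))).length : ℤ) = ((l.toFinset.filter p).card : ℤ) := by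
  have : (l.filter (fun e => decide (p e))).toFinset = l.toFinset.filter p := by
    ext e; simp [List.mem_filter]
  rw [← this, List.toFinset_card_of_nodup (hn.filter _)]

lemma ctl_eq (l : List G.E) (hn : l.Nodup) (v : G.V) :
    ctl l v = outZ (l.toFinset) v := list_count_eq l hn _
lemma chd_eq (l : List G.E) (hn : l.Nodup) (v : G.V) :
    chd l v = inZ (l.toFinset) v := list_count_eq l hn _

lemma exZ_sdiff (F S : Finset G.E) (h : S ⊆ F) (v : G.V) :
    exZ (F \ S) v = exZ F v - exZ S v := by
  simp only [exZ, outZ, inZ, filter_sdiff_Z F S h]; ring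

lemma exZ_union (F S : Finset G.E) (h : Disjoint F S) (v : G.V) :
    exZ (F ∪ S) v = exZ F v + exZ S v := by
  simp only [exZ, outZ, inZ, filter_union_Z F S h]; ring


lemma sum_card_fiber (F : Finset G.E) (X : Set G.V) [DecidablePred (· ∈ X)] (f : G.E → G.V) :
    ∑ v ∈ univ.filter (· ∈ X), (((F.filter fun e => f e = v).card : ℤ)) =
      (((F.filter fun e => f e ∈ X).card : ℤ)) := by
  have h := Finset.card_eq_sum_card_fiberwise
    (s := F.filter fun e => f e ∈ X) (t := univ.filter (· ∈ X)) (f := f)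
    (fun e he => by simp at he ⊢; exact he.2)
  rw [h]; push_cast
  refine Finset.sum_congr rfl fun v hv => ?_
  simp only [mem_filter, mem_univ, true_and] at hv
  have hfe : ((F.filter fun e => f e ∈ X).filter fun e => f e = v) = F.filter fun e => f e = v := by
    ext e
    simp only [mem_filter]
    constructor
    · rintro ⟨⟨h1, _⟩, h3⟩; exact ⟨h1, h3⟩
    · rintro ⟨h1, h3⟩; exact ⟨⟨h1, h3 ▸ hv⟩, h3⟩
  rw [hfe]

lemma sum_exZ (F : Finset G.E) (X : Set G.V) [DecidablePred (· ∈ X)] :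
    ∑ v ∈ univ.filter (· ∈ X), exZ F v =
      (((F.filter fun e => G.tail e ∈ X ∧ G.head e ∉ X).card : ℤ)) -
      (((F.filter fun e => G.head e ∈ X ∧ G.tail e ∉ X).card : ℤ)) := by
  have hsplit : ∀ (f g : G.E → G.V), ((F.filter fun e => f e ∈ X).card : ℤ) =
      ((F.filter fun e => f e ∈ X ∧ g e ∈ X).card : ℤ) +
      ((F.filter fun e => f e ∈ X ∧ g e ∉ X).card : ℤ) := by
    intro f g
    rw [← Finset.filter_filter, ← Finset.filter_filter]
    exact_mod_cast (Finset.card_filter_add_card_filter_not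
      (s := F.filter fun e => f e ∈ X) (p := fun e => g e ∈ X)).symm
  have h1 := sum_card_fiber F X G.tail
  have h2 := sum_card_fiber F X G.head
  have e1 := hsplit G.tail G.head
  have e2 := hsplit G.head G.tail
  have hcomm : (F.filter fun e => G.head e ∈ X ∧ G.tail e ∈ X) =
      (F.filter fun e => G.tail e ∈ X ∧ G.head e ∈ X) := by
    apply Finset.filter_congr; intro e _; exact and_comm
  rw [hcomm] at e2
  simp only [exZ, outZ, inZ, Finset.sum_sub_distrib, h1, h2]
  omega


lemma outZ_mono {S F : Finset G.E} (h : S ⊆ F) (v : G.V) : outZ S v ≤ outZ F v := by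
  simp only [outZ]
  exact_mod_cast Finset.card_le_card (Finset.filter_subset_filter _ h)
lemma inZ_mono {S F : Finset G.E} (h : S ⊆ F) (v : G.V) : inZ S v ≤ inZ F v := by
  simp only [inZ]
  exact_mod_cast Finset.card_le_card (Finset.filter_subset_filter _ h)
lemma outZ_nonneg (F : Finset G.E) (v : G.V) : 0 ≤ outZ F v := Int.natCast_nonneg _
lemma inZ_nonneg (F : Finset G.E) (v : G.V) : 0 ≤ inZ F v := Int.natCast_nonneg _

/-- one step: a trail in F from s either already ends at a deficit vertex, or can be extended. -/
lemma step (F : Finset G.E) (s : G.V) (hs : inZ F s < outZ F s)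
    (l : List G.E) (hne : l ≠ []) (hch : l.Chain' (fun e f => G.head e = G.tail f))
    (hnd : l.Nodup) (hsub : ∀ e ∈ l, e ∈ F) (hfst : G.tail (l.head hne) = s) :
    (outZ F (G.head (l.getLast hne)) < inZ F (G.head (l.getLast hne))) ∨
    (∃ e : G.E, e ∈ F ∧ e ∉ l ∧ G.tail e = G.head (l.getLast hne)) := by
  set t := G.head (l.getLast hne) with ht
  by_cases hdone : outZ F t < inZ F t
  · exact Or.inl hdone
  push_neg at hdone
  right
  have hbal := list_balance l hne hch t
  rw [hfst, if_pos rfl] at hbal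
  have hchd : chd l t ≤ inZ F t := by
    rw [chd_eq l hnd]
    exact inZ_mono (fun e he => hsub e (List.mem_toFinset.mp he)) t
  have hctl : ctl l t < outZ F t := by
    by_cases hst : s = t
    · rw [if_pos hst] at hbal
      have := hst ▸ hs
      omega
    · rw [if_neg hst] at hbal
      omega
  by_contra hno
  push_neg at hno
  have hsub' : F.filter (fun e => G.tail e = t) ⊆ l.toFinset.filter (fun e => G.tail e = t) := by
    intro e he
    rw [Finset.mem_filter] at he ⊢
    refine ⟨List.mem_toFinset.mpr ?_, he.2⟩
    by_contra hmem
    exact hno e he.1 hmem he.2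
  have : outZ F t ≤ ctl l t := by
    rw [ctl_eq l hnd]
    have := Finset.card_le_card hsub'
    simp only [outZ]
    exact_mod_cast this
  omega

lemma extract_trail (F : Finset G.E) (s : G.V) (hs : inZ F s < outZ F s) :
    ∃ t : G.Trail, t.first = s ∧ (∀ e ∈ t.edges, e ∈ F) ∧ outZ F t.last < inZ F t.last := by
  have hstart : ∃ e ∈ F, G.tail e = s := by
    have : (0:ℤ) < outZ F s := lt_of_le_of_lt (inZ_nonneg F s) hs
    have hne : (F.filter (fun e => G.tail e = s)).Nonempty := by
      rw [← Finset.card_pos]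
      simp only [outZ] at this
      exact_mod_cast this
    obtain ⟨e, he⟩ := hne
    rw [Finset.mem_filter] at he
    exact ⟨e, he.1, he.2⟩
  obtain ⟨e₀, he₀F, he₀s⟩ := hstart
  suffices h : ∀ (n : ℕ) (l : List G.E) (hne : l ≠ []),
      l.Chain' (fun e f => G.head e = G.tail f) → l.Nodup →
      (∀ e ∈ l, e ∈ F) → G.tail (l.head hne) = s → F.card ≤ l.length + n →
      ∃ t : G.Trail, t.first = s ∧ (∀ e ∈ t.edges, e ∈ F) ∧ outZ F t.last < inZ F t.last by
    exact h F.card [e₀] (by simp) (List.isChain_singleton _) (by simp) (by simpa) (by simpa) (by simp)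
  intro n
  induction n with
  | zero =>
    intro l hne hch hnd hsub hfst hmeas
    rcases step F s hs l hne hch hnd hsub hfst with hdone | ⟨e, heF, hel, het⟩
    · exact ⟨⟨l, hne, hch, hnd⟩, hfst, hsub, hdone⟩
    · exfalso
      have hcard : l.length + 1 ≤ F.card := by
        have h1 : insert e l.toFinset ⊆ F := by
          intro x hx
          rcases Finset.mem_insert.mp hx with rfl | hx
          · exact heF
          · exact hsub x (List.mem_toFinset.mp hx)
        have h2 : (insert e l.toFinset).card = l.length + 1 := by
          rw [Finset.card_insert_of_notMem (fun h => hel (List.mem_toFinset.mp h)),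
            List.toFinset_card_of_nodup hnd]
        rw [← h2]; exact Finset.card_le_card h1
      omega
  | succ n ih =>
    intro l hne hch hnd hsub hfst hmeas
    rcases step F s hs l hne hch hnd hsub hfst with hdone | ⟨e, heF, hel, het⟩
    · exact ⟨⟨l, hne, hch, hnd⟩, hfst, hsub, hdone⟩
    · have hne' : l ++ [e] ≠ [] := by simp
      have hch' : (l ++ [e]).Chain' (fun e f => G.head e = G.tail f) := by
        show List.IsChain _ (l ++ [e]); rw [List.isChain_append]
        refine ⟨hch, List.isChain_singleton _, ?_⟩
        intro x hx y hy
        rw [List.getLast?_eq_getLast hne] at hx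
        simp only [Option.mem_def, Option.some.injEq] at hx
        simp only [List.head?_cons, Option.mem_def, Option.some.injEq] at hy
        subst hx; subst hy
        exact het.symm
      have hnd' : (l ++ [e]).Nodup := by
        rw [List.nodup_append]
        exact ⟨hnd, List.nodup_singleton _, by simpa using fun a ha (h : a = e) => hel (h ▸ ha)⟩
      have hsub' : ∀ x ∈ l ++ [e], x ∈ F := by
        intro x hx
        rcases List.mem_append.mp hx with hx | hx
        · exact hsub x hx
        · simp only [List.mem_singleton] at hx; subst hx; exact heF
      have hfst' : G.tail ((l ++ [e]).head hne') = s := by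
        rwa [List.head_append_of_ne_nil hne]
      exact ih (l ++ [e]) hne' hch' hnd' hsub' hfst' (by simp; omega)


lemma exZ_remove_trail (F : Finset G.E) (τ : G.Trail) (hsub : ∀ e ∈ τ.edges, e ∈ F) (v : G.V) :
    exZ (F \ τ.edges.toFinset) v =
      exZ F v - (if τ.first = v then 1 else 0) + (if τ.last = v then 1 else 0) := by
  have hss : τ.edges.toFinset ⊆ F := fun e he => hsub e (List.mem_toFinset.mp he)
  rw [exZ_sdiff F _ hss v]
  have hbal := list_balance τ.edges τ.nonempty τ.chain v
  rw [ctl_eq _ τ.nodup, chd_eq _ τ.nodup] at hbal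
  have : exZ τ.edges.toFinset v =
      (if τ.first = v then (1:ℤ) else 0) - (if τ.last = v then 1 else 0) := by
    rw [exZ]; rw [hbal]; rfl
  rw [this]; ring

lemma decompose (A B : Set G.V) [DecidablePred (· ∈ A)] (hAB : Disjoint A B) :
    ∀ (m : ℕ) (F : Finset G.E),
    (∀ v, v ∉ A → v ∉ B → exZ F v = 0) →
    (∀ v ∈ A, 0 ≤ exZ F v) → (∀ v ∈ B, exZ F v ≤ 0) →
    (∑ v ∈ univ.filter (· ∈ A), exZ F v) = (m : ℤ) →
    ∃ T : Fin m → G.Trail, (∀ i, (T i).first ∈ A ∧ (T i).last ∈ B) ∧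
      (∀ i, ∀ e ∈ (T i).edges, e ∈ F) ∧
      (∀ i j, i ≠ j → (T i).edges.Disjoint (T j).edges) := by
  intro m
  induction m with
  | zero =>
    intro F _ _ _ _
    exact ⟨Fin.elim0, fun i => i.elim0, fun i => i.elim0, fun i => i.elim0⟩
  | succ m ih =>
    intro F h0 hA hB hsum
    -- find a source vertex
    have hex : ∃ s ∈ univ.filter (· ∈ A), (0:ℤ) < exZ F s := by
      apply Finset.exists_lt_of_sum_lt (f := fun _ => (0:ℤ))
      rw [hsum, Finset.sum_const_zero]
      positivity
    obtain ⟨s, hsA, hspos⟩ := hex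
    rw [Finset.mem_filter] at hsA
    have hsA : s ∈ A := hsA.2
    have hslt : inZ F s < outZ F s := by simp only [exZ] at hspos; omega
    obtain ⟨τ, hτfirst, hτsub, hτlast⟩ := extract_trail F s hslt
    have htB : τ.last ∈ B := by
      by_contra htB
      have : exZ F τ.last < 0 := by simp only [exZ]; omega
      by_cases htA : τ.last ∈ A
      · exact absurd (hA _ htA) (by omega)
      · exact absurd (h0 _ htA htB) (by omega)
    have htnA : τ.last ∉ A := fun h => (hAB.le_bot ⟨h, htB⟩ : _)
    have hsnB : s ∉ B := fun h => (hAB.le_bot ⟨hsA, h⟩ : _)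
    set F' := F \ τ.edges.toFinset with hF'
    have hrem : ∀ v, exZ F' v = exZ F v - (if s = v then 1 else 0) +
        (if τ.last = v then 1 else 0) := by
      intro v; rw [hF', exZ_remove_trail F τ hτsub v, hτfirst]
    have h0' : ∀ v, v ∉ A → v ∉ B → exZ F' v = 0 := by
      intro v hvA hvB
      have h1 : ¬ s = v := fun h => hvA (by rw [← h]; exact hsA)
      have h2 : ¬ τ.last = v := fun h => hvB (by rw [← h]; exact htB)
      rw [hrem v, h0 v hvA hvB, if_neg h1, if_neg h2]
      ring
    have hA' : ∀ v ∈ A, 0 ≤ exZ F' v := by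
      intro v hv
      have h1 : ¬ τ.last = v := fun h => htnA (by rw [h]; exact hv)
      rw [hrem v, if_neg h1]
      by_cases hvs : s = v
      · rw [if_pos hvs]
        have : 0 < exZ F v := by rw [← hvs]; exact hspos
        omega
      · rw [if_neg hvs]
        have := hA v hv
        omega
    have hB' : ∀ v ∈ B, exZ F' v ≤ 0 := by
      intro v hv
      have h1 : ¬ s = v := fun h => hsnB (by rw [h]; exact hv)
      rw [hrem v, if_neg h1]
      by_cases hvt : τ.last = v
      · rw [if_pos hvt]
        have : exZ F v < 0 := by rw [← hvt]; simp only [exZ]; omega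
        omega
      · rw [if_neg hvt]
        have := hB v hv
        omega
    have hsum' : (∑ v ∈ univ.filter (· ∈ A), exZ F' v) = (m : ℤ) := by
      have : ∑ v ∈ univ.filter (· ∈ A), exZ F' v =
          (∑ v ∈ univ.filter (· ∈ A), exZ F v)
          - (∑ v ∈ univ.filter (· ∈ A), if s = v then (1:ℤ) else 0)
          + (∑ v ∈ univ.filter (· ∈ A), if τ.last = v then (1:ℤ) else 0) := by
        rw [← Finset.sum_sub_distrib, ← Finset.sum_add_distrib]
        exact Finset.sum_congr rfl fun v _ => hrem v
      rw [this, hsum, Finset.sum_ite_eq, Finset.sum_ite_eq,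
        if_pos (by simp [hsA]), if_neg (by simp [htnA])]
      push_cast; ring
    obtain ⟨T', hT'ends, hT'sub, hT'disj⟩ := ih F' h0' hA' hB' hsum'
    have hτdisjT' : ∀ j, τ.edges.Disjoint (T' j).edges := by
      intro j a ha haj
      have := hT'sub j a haj
      rw [hF', Finset.mem_sdiff] at this
      exact this.2 (List.mem_toFinset.mpr ha)
    refine ⟨Fin.cons τ T', ?_, ?_, ?_⟩
    · intro i
      induction i using Fin.cases with
      | zero => simpa [hτfirst] using ⟨hsA, htB⟩
      | succ i => simpa using hT'ends i
    · intro i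
      induction i using Fin.cases with
      | zero => simpa using hτsub
      | succ i =>
        simp only [Fin.cons_succ]
        intro e he
        have := hT'sub i e he
        rw [hF', Finset.mem_sdiff] at this
        exact this.1
    · intro i j hij
      induction i using Fin.cases with
      | zero =>
        induction j using Fin.cases with
        | zero => exact absurd rfl hij
        | succ j => simpa using hτdisjT' j
      | succ i =>
        induction j using Fin.cases with
        | zero => simpa using (hτdisjT' i).symm
        | succ j =>
          simpa using hT'disj i j (fun h => hij (by rw [h]))


/-- source of a residual item: forward (true) uses the edge as-is, backward reversed. -/
def rsrc (p : G.E × Bool) : G.V := if p.2 then G.tail p.1 else G.head p.1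
def rdst (p : G.E × Bool) : G.V := if p.2 then G.head p.1 else G.tail p.1

/-- residual walk w.r.t. F from u to v -/
def IsRW (F : Finset G.E) : G.V → G.V → List (G.E × Bool) → Prop
  | u, v, [] => u = v
  | u, v, p :: w => rsrc p = u ∧ (if p.2 then p.1 ∉ F else p.1 ∈ F) ∧ IsRW F (rdst p) v w

lemma IsRW_append {F : Finset G.E} : ∀ (a b : List (G.E × Bool)) (u v : G.V),
    IsRW F u v (a ++ b) ↔ ∃ m, IsRW F u m a ∧ IsRW F m v b
  | [], b, u, v => by
    simp only [List.nil_append, IsRW]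
    constructor
    · intro h; exact ⟨u, rfl, h⟩
    · rintro ⟨m, rfl, h⟩; exact h
  | p :: a, b, u, v => by
    constructor
    · rintro ⟨h1, h2, h3⟩
      obtain ⟨m, h4, h5⟩ := (IsRW_append a b (rdst p) v).mp h3
      exact ⟨m, ⟨h1, h2, h4⟩, h5⟩
    · rintro ⟨m, ⟨h1, h2, h3⟩, h4⟩
      exact ⟨h1, h2, (IsRW_append a b (rdst p) v).mpr ⟨m, h3, h4⟩⟩

lemma rsrc_swap {p q : G.E × Bool} (h1 : q.1 = p.1) (h2 : q.2 ≠ p.2) :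
    rsrc q = rdst p ∧ rdst q = rsrc p := by
  rcases p with ⟨e, b⟩; rcases q with ⟨f, c⟩
  cases b <;> cases c <;> simp_all [rsrc, rdst]

/-- any residual walk can be replaced by one with no repeated edges. -/
lemma dedup {F : Finset G.E} : ∀ (n : ℕ) (w : List (G.E × Bool)), w.length ≤ n →
    ∀ (u v : G.V), IsRW F u v w →
    ∃ w', IsRW F u v w' ∧ (w'.map Prod.fst).Nodup
  | 0, w, hlen, u, v => by
    have hw : w = [] := List.eq_nil_of_length_eq_zero (Nat.le_zero.mp hlen)
    subst hw
    intro h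
    exact ⟨[], h, by simp⟩
  | n + 1, [], _, u, v => fun h => ⟨[], h, by simp⟩
  | n + 1, p :: w, hlen, u, v => by
    rintro ⟨hsrc, hcons, hrest⟩
    obtain ⟨w', hw', hnd⟩ := dedup n w (by simpa using hlen) (rdst p) v hrest
    by_cases hp : p.1 ∈ w'.map Prod.fst
    · obtain ⟨q, hqw, hq1⟩ := List.exists_of_mem_map hp
      obtain ⟨a, b, rfl⟩ := List.append_of_mem hqw
      obtain ⟨m, hma, hmq⟩ := (IsRW_append a (q :: b) _ _).mp hw'
      obtain ⟨hqm, hqcons, hqb⟩ := hmq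
      have hsfx : ((q :: b).map Prod.fst).Nodup := by
        have hsl : ((q :: b).map Prod.fst).Sublist ((a ++ q :: b).map Prod.fst) :=
          ((List.sublist_append_right a (q :: b)).map Prod.fst)
        exact hnd.sublist hsl
      by_cases hdir : q.2 = p.2
      · have hq : q = p := by
          rcases q with ⟨q1, q2⟩; rcases p with ⟨p1, p2⟩
          simp_all
        have hnew : IsRW F u v (q :: b) := by
          refine ⟨?_, hqcons, hqb⟩
          rw [hq, hsrc]
        exact ⟨q :: b, hnew, hsfx⟩
      · obtain ⟨h1, h2⟩ := rsrc_swap hq1 hdir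
        have hu : rdst q = u := by rw [h2, hsrc]
        rw [hu] at hqb
        exact ⟨b, hqb, hsfx.of_cons⟩
    · refine ⟨p :: w', ⟨hsrc, hcons, hw'⟩, ?_⟩
      rw [List.map_cons, List.nodup_cons]
      exact ⟨hp, hnd⟩

/-- the forward (added) edges and backward (removed) edges of a residual walk -/
def adL (w : List (G.E × Bool)) : List G.E := (w.filter (fun p => p.2)).map Prod.fst
def rmL (w : List (G.E × Bool)) : List G.E := (w.filter (fun p => !p.2)).map Prod.fst

lemma adL_nodup {w : List (G.E × Bool)} (h : (w.map Prod.fst).Nodup) : (adL w).Nodup :=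
  h.sublist ((w.filter_sublist).map Prod.fst)
lemma rmL_nodup {w : List (G.E × Bool)} (h : (w.map Prod.fst).Nodup) : (rmL w).Nodup :=
  h.sublist ((w.filter_sublist).map Prod.fst)

lemma adL_cons (p : G.E × Bool) (w : List (G.E × Bool)) :
    adL (p :: w) = if p.2 then p.1 :: adL w else adL w := by
  simp only [adL, List.filter_cons]
  rcases p with ⟨e, b⟩; cases b <;> simp
lemma rmL_cons (p : G.E × Bool) (w : List (G.E × Bool)) :
    rmL (p :: w) = if p.2 then rmL w else p.1 :: rmL w := by
  simp only [rmL, List.filter_cons]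
  rcases p with ⟨e, b⟩; cases b <;> simp

lemma IsRW_mem {F : Finset G.E} : ∀ (w : List (G.E × Bool)) (u v : G.V), IsRW F u v w →
    ∀ p ∈ w, (if p.2 then p.1 ∉ F else p.1 ∈ F)
  | [], u, v, _ => by intro p hp; simp at hp
  | q :: w, u, v, h => by
    obtain ⟨h1, h2, h3⟩ := h
    intro p hp
    rcases List.mem_cons.mp hp with rfl | hp
    · exact h2
    · exact IsRW_mem w _ v h3 p hp

lemma rmL_sub {F : Finset G.E} {w : List (G.E × Bool)} {u v : G.V} (h : IsRW F u v w) :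
    ∀ e ∈ rmL w, e ∈ F := by
  intro e he
  obtain ⟨p, hp, rfl⟩ := List.exists_of_mem_map he
  have hp2 := List.mem_filter.mp hp
  have := IsRW_mem w u v h p hp2.1
  simp only [Bool.not_eq_true'] at hp2
  rw [hp2.2] at this
  simpa using this

lemma adL_notmem {F : Finset G.E} {w : List (G.E × Bool)} {u v : G.V} (h : IsRW F u v w) :
    ∀ e ∈ adL w, e ∉ F := by
  intro e he
  obtain ⟨p, hp, rfl⟩ := List.exists_of_mem_map he
  have hp2 := List.mem_filter.mp hp
  have := IsRW_mem w u v h p hp2.1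
  rw [hp2.2] at this
  simpa using this

/-- residual walk balance -/
lemma rw_balance {F : Finset G.E} : ∀ (w : List (G.E × Bool)) (u v : G.V), IsRW F u v w →
    ∀ x, (ctl (adL w) x - chd (adL w) x) - (ctl (rmL w) x - chd (rmL w) x) =
      (if u = x then (1:ℤ) else 0) - (if v = x then 1 else 0)
  | [], u, v, h => by
    intro x
    rw [show u = v from h]
    simp [adL, rmL, ctl, chd]
  | p :: w, u, v, h => by
    obtain ⟨h1, h2, h3⟩ := h
    intro x
    have ih := rw_balance w (rdst p) v h3 x
    rcases p with ⟨e, b⟩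
    cases b
    · have had : adL ((e, false) :: w) = adL w := by rw [adL_cons]; simp
      have hrm : rmL ((e, false) :: w) = e :: rmL w := by rw [rmL_cons]; simp
      have h1' : G.head e = u := by simpa [rsrc] using h1
      have hd : rdst (e, false) = G.tail e := by simp [rdst]
      rw [hd] at ih
      rw [had, hrm, ctl_cons, chd_cons, ← h1']
      split_ifs at ih ⊢ <;> omega
    · have had : adL ((e, true) :: w) = e :: adL w := by rw [adL_cons]; simp
      have hrm : rmL ((e, true) :: w) = rmL w := by rw [rmL_cons]; simp
      have h1' : G.tail e = u := by simpa [rsrc] using h1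
      have hd : rdst (e, true) = G.head e := by simp [rdst]
      rw [hd] at ih
      rw [had, hrm, ctl_cons, chd_cons, ← h1']
      split_ifs at ih ⊢ <;> omega

/-- the augmented edge set -/
def AugF (F : Finset G.E) (w : List (G.E × Bool)) : Finset G.E :=
  (F \ (rmL w).toFinset) ∪ (adL w).toFinset

lemma exZ_aug {F : Finset G.E} {w : List (G.E × Bool)} {u v : G.V}
    (h : IsRW F u v w) (hnd : (w.map Prod.fst).Nodup) (x : G.V) :
    exZ (AugF F w) x = exZ F x + (if u = x then (1:ℤ) else 0) - (if v = x then 1 else 0) := by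
  have hrm : (rmL w).toFinset ⊆ F := fun e he => rmL_sub h e (List.mem_toFinset.mp he)
  have hdisj : Disjoint (F \ (rmL w).toFinset) (adL w).toFinset := by
    apply Finset.disjoint_left.mpr
    intro e he1 he2
    exact adL_notmem h e (List.mem_toFinset.mp he2) (Finset.mem_sdiff.mp he1).1
  rw [AugF, exZ_union _ _ hdisj, exZ_sdiff _ _ hrm]
  have hbal := rw_balance w u v h x
  rw [ctl_eq _ (adL_nodup hnd), chd_eq _ (adL_nodup hnd),
    ctl_eq _ (rmL_nodup hnd), chd_eq _ (rmL_nodup hnd)] at hbal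
  have : exZ (adL w).toFinset x - exZ (rmL w).toFinset x =
      (if u = x then (1:ℤ) else 0) - (if v = x then 1 else 0) := hbal
  omega


inductive Reach (F : Finset G.E) (S : Set G.V) : G.V → Prop
  | base {v} : v ∈ S → Reach F S v
  | fwd {e} : Reach F S (G.tail e) → e ∉ F → Reach F S (G.head e)
  | bwd {e} : Reach F S (G.head e) → e ∈ F → Reach F S (G.tail e)

lemma reach_walk {F : Finset G.E} {S : Set G.V} {v : G.V} (h : Reach F S v) :
    ∃ u ∈ S, ∃ w, IsRW F u v w := by
  induction h with
  | base hv => exact ⟨_, hv, [], rfl⟩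
  | @fwd e h hF ih =>
    obtain ⟨u, hu, w, hw⟩ := ih
    refine ⟨u, hu, w ++ [(e, true)], ?_⟩
    refine (IsRW_append w [(e, true)] u _).mpr ⟨G.tail e, hw, ?_, ?_, ?_⟩
    · simp [rsrc]
    · simpa using hF
    · show rdst (e, true) = G.head e
      simp [rdst]
  | @bwd e h hF ih =>
    obtain ⟨u, hu, w, hw⟩ := ih
    refine ⟨u, hu, w ++ [(e, false)], ?_⟩
    refine (IsRW_append w [(e, false)] u _).mpr ⟨G.head e, hw, ?_, ?_, ?_⟩
    · simp [rsrc]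
    · simpa using hF
    · show rdst (e, false) = G.tail e
      simp [rdst]

lemma eul_exZ (hG : G.Eulerian) (v : G.V) : exZ (Finset.univ : Finset G.E) v = 0 := by
  have h := hG v
  rw [Nat.card_eq_fintype_card, Nat.card_eq_fintype_card, Fintype.card_subtype,
    Fintype.card_subtype] at h
  simp only [exZ, outZ, inZ]
  omega

lemma cut_card (X : Set G.V) [DecidablePred (· ∈ X)] :
    (Nat.card {e : G.E // (G.tail e ∈ X ∧ G.head e ∉ X) ∨ (G.tail e ∉ X ∧ G.head e ∈ X)} : ℤ) =
      ((univ.filter fun e => G.tail e ∈ X ∧ G.head e ∉ X).card : ℤ) +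
      ((univ.filter fun e => G.head e ∈ X ∧ G.tail e ∉ X).card : ℤ) := by
  rw [Nat.card_eq_fintype_card, Fintype.card_subtype]
  have hsplit : univ.filter
      (fun e => (G.tail e ∈ X ∧ G.head e ∉ X) ∨ (G.tail e ∉ X ∧ G.head e ∈ X)) =
      (univ.filter fun e => G.tail e ∈ X ∧ G.head e ∉ X) ∪
      (univ.filter fun e => G.tail e ∉ X ∧ G.head e ∈ X) := Finset.filter_or _ _ _
  rw [hsplit, Finset.card_union_of_disjoint]
  · have : (univ.filter fun e : G.E => G.tail e ∉ X ∧ G.head e ∈ X) =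
        (univ.filter fun e => G.head e ∈ X ∧ G.tail e ∉ X) := by
      apply Finset.filter_congr; intro e _; exact and_comm
    rw [this]
    push_cast; ring
  · rw [Finset.disjoint_filter]
    rintro e _ ⟨h1, _⟩ ⟨h2, _⟩
    exact h2 h1

lemma flow_or_cut (hG : G.Eulerian) (X₁ X₂ : Set G.V)
    [DecidablePred (· ∈ X₁)] [DecidablePred (· ∈ X₂)]
    (hdisj : Disjoint X₁ X₂) : ∀ m : ℕ,
    (∃ F : Finset G.E,
      (∀ v, v ∉ X₁ → v ∉ X₂ → exZ F v = 0) ∧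
      (∀ v ∈ X₁, 0 ≤ exZ F v) ∧ (∀ v ∈ X₂, exZ F v ≤ 0) ∧
      (∑ v ∈ univ.filter (· ∈ X₁), exZ F v) = (m : ℤ)) ∨
    (∃ X : Set G.V, X₁ ⊆ X ∧ X₂ ⊆ Xᶜ ∧
      Nat.card {e : G.E //
        (G.tail e ∈ X ∧ G.head e ∉ X) ∨ (G.tail e ∉ X ∧ G.head e ∈ X)} < 2 * m) := by
  intro m
  induction m with
  | zero =>
    left
    refine ⟨∅, ?_, ?_, ?_, ?_⟩ <;>
      simp [exZ, outZ, inZ]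
  | succ m ih =>
    rcases ih with ⟨F, h0, hA, hB, hsum⟩ | ⟨X, hX1, hX2, hXcard⟩
    · by_cases hreach : ∃ v ∈ X₂, Reach F X₁ v
      · -- augment
        left
        obtain ⟨v, hv, hr⟩ := hreach
        obtain ⟨u, hu, w, hw⟩ := reach_walk hr
        obtain ⟨w', hw', hnd⟩ := dedup w.length w le_rfl u v hw
        have huv : ¬ v = u := fun h => (hdisj.le_bot ⟨h ▸ hu, hv⟩ : _)
        have haug := fun x => exZ_aug hw' hnd x
        refine ⟨AugF F w', ?_, ?_, ?_, ?_⟩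
        · intro x hx1 hx2
          have h1 : ¬ u = x := fun h => hx1 (h ▸ hu)
          have h2 : ¬ v = x := fun h => hx2 (h ▸ hv)
          rw [haug x, h0 x hx1 hx2, if_neg h1, if_neg h2]
          ring
        · intro x hx
          have h2 : ¬ v = x := fun h => (hdisj.le_bot ⟨hx, h ▸ hv⟩ : _)
          rw [haug x, if_neg h2]
          have := hA x hx
          by_cases h1 : u = x
          · rw [if_pos h1]; omega
          · rw [if_neg h1]; omega
        · intro x hx
          have h1 : ¬ u = x := fun h => (hdisj.le_bot ⟨h ▸ hu, hx⟩ : _)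
          rw [haug x, if_neg h1]
          have := hB x hx
          by_cases h2 : v = x
          · rw [if_pos h2]; omega
          · rw [if_neg h2]; omega
        · have : ∑ x ∈ univ.filter (· ∈ X₁), exZ (AugF F w') x =
              (∑ x ∈ univ.filter (· ∈ X₁), exZ F x)
              + (∑ x ∈ univ.filter (· ∈ X₁), if u = x then (1:ℤ) else 0)
              - (∑ x ∈ univ.filter (· ∈ X₁), if v = x then (1:ℤ) else 0) := by
            rw [← Finset.sum_add_distrib, ← Finset.sum_sub_distrib]
            exact Finset.sum_congr rfl fun x _ => haug x
          rw [this, hsum, Finset.sum_ite_eq, Finset.sum_ite_eq,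
            if_pos (by simp [hu]), if_neg (by simp; exact fun h => (hdisj.le_bot ⟨h, hv⟩ : _))]
          push_cast; ring
      · -- cut
        right
        push_neg at hreach
        classical
        refine ⟨{x | Reach F X₁ x}, fun x hx => Reach.base hx, fun v hv => hreach v hv, ?_⟩
        set X : Set G.V := {x | Reach F X₁ x} with hXdef
        have hfwd : ∀ e : G.E, G.tail e ∈ X → G.head e ∉ X → e ∈ F := by
          intro e h1 h2
          by_contra h3
          exact h2 (Reach.fwd h1 h3)
        have hbwd : ∀ e : G.E, e ∈ F → G.head e ∈ X → G.tail e ∈ X := by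
          intro e h1 h2
          exact Reach.bwd h2 h1
        have hzero : ((F.filter fun e => G.head e ∈ X ∧ G.tail e ∉ X).card : ℤ) = 0 := by
          norm_cast
          rw [Finset.card_eq_zero, Finset.filter_eq_empty_iff]
          rintro e heF ⟨h1, h2⟩
          exact h2 (hbwd e heF h1)
        have hfull : (F.filter fun e => G.tail e ∈ X ∧ G.head e ∉ X) =
            (univ.filter fun e => G.tail e ∈ X ∧ G.head e ∉ X) := by
          ext e
          simp only [Finset.mem_filter, Finset.mem_univ, true_and]
          exact ⟨fun h => h.2, fun h => ⟨hfwd e h.1 h.2, h⟩⟩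
        have hsumX : ∑ x ∈ univ.filter (· ∈ X), exZ F x = (m : ℤ) := by
          rw [← Finset.sum_filter_add_sum_filter_not (univ.filter (· ∈ X)) (· ∈ X₁)]
          have e1 : (univ.filter (· ∈ X)).filter (· ∈ X₁) = univ.filter (· ∈ X₁) := by
            ext x
            simp only [Finset.mem_filter, Finset.mem_univ, true_and]
            exact ⟨fun h => h.2, fun h => ⟨Reach.base h, h⟩⟩
          have e2 : ∑ x ∈ (univ.filter (· ∈ X)).filter (· ∉ X₁), exZ F x = 0 := by
            apply Finset.sum_eq_zero
            intro x hx
            simp only [Finset.mem_filter, Finset.mem_univ, true_and] at hx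
            obtain ⟨hxX, hxn1⟩ := hx
            by_cases hx2 : x ∈ X₂
            · exact absurd hxX (hreach x hx2)
            · exact h0 x hxn1 hx2
          rw [e1, e2, hsum]
          ring
        have hplus := sum_exZ F X
        rw [hsumX, hzero, hfull] at hplus
        have hminus := sum_exZ (Finset.univ : Finset G.E) X
        have heul : ∑ x ∈ univ.filter (· ∈ X), exZ (Finset.univ : Finset G.E) x = 0 :=
          Finset.sum_eq_zero fun x _ => eul_exZ hG x
        rw [heul] at hminus
        have hcc := cut_card X
        omega
    · exact Or.inr ⟨X, hX1, hX2, by omega⟩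

end MAux

open MAux Finset in
theorem stmt2 (G : MDigraph) (hG : G.Eulerian) (X₁ X₂ : Set G.V)
    (hdisj : Disjoint X₁ X₂) (k : ℕ) :
    (∃ P Q : Fin k → G.Trail,
        (∀ i, (P i).first ∈ X₁ ∧ (P i).last ∈ X₂) ∧
        (∀ i, (Q i).first ∈ X₂ ∧ (Q i).last ∈ X₁) ∧
        (∀ i j, i ≠ j → (P i).edges.Disjoint (P j).edges) ∧
        (∀ i j, i ≠ j → (Q i).edges.Disjoint (Q j).edges) ∧
        (∀ i j, (P i).edges.Disjoint (Q j).edges)) ∨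
      (∃ X : Set G.V, X₁ ⊆ X ∧ X₂ ⊆ Xᶜ ∧
        Nat.card {e : G.E //
          (G.tail e ∈ X ∧ G.head e ∉ X) ∨ (G.tail e ∉ X ∧ G.head e ∈ X)} < 2 * k) := by
  classical
  rcases flow_or_cut hG X₁ X₂ hdisj k with ⟨F, h0, hA, hB, hsum⟩ | hcut
  · left
    obtain ⟨P, hPends, hPsub, hPdisj⟩ := decompose X₁ X₂ hdisj k F h0 hA hB hsum
    have hcomp : ∀ v, exZ ((univ : Finset G.E) \ F) v = - exZ F v := by
      intro v
      rw [exZ_sdiff _ _ (Finset.subset_univ F), eul_exZ hG]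
      ring
    have h0' : ∀ v, v ∉ X₂ → v ∉ X₁ → exZ ((univ : Finset G.E) \ F) v = 0 := by
      intro v h2 h1
      rw [hcomp, h0 v h1 h2]
      ring
    have hA' : ∀ v ∈ X₂, 0 ≤ exZ ((univ : Finset G.E) \ F) v := by
      intro v hv
      rw [hcomp]
      have := hB v hv
      omega
    have hB' : ∀ v ∈ X₁, exZ ((univ : Finset G.E) \ F) v ≤ 0 := by
      intro v hv
      rw [hcomp]
      have := hA v hv
      omega
    have htot : ∑ v ∈ (univ : Finset G.V), exZ F v = 0 := by
      have h1 := sum_exZ F (Set.univ : Set G.V)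
      simpa using h1
    have hs1 := Finset.sum_filter_add_sum_filter_not (univ : Finset G.V) (· ∈ X₁) (exZ F)
    have hs2 := Finset.sum_filter_add_sum_filter_not
      ((univ : Finset G.V).filter (fun v => ¬ v ∈ X₁)) (· ∈ X₂) (exZ F)
    have e0 : ∑ v ∈ ((univ : Finset G.V).filter (fun v => ¬ v ∈ X₁)).filter
        (fun v => ¬ v ∈ X₂), exZ F v = 0 := by
      apply Finset.sum_eq_zero
      intro x hx
      simp only [Finset.mem_filter, Finset.mem_univ, true_and] at hx
      exact h0 x hx.1 hx.2
    have e1 : ((univ : Finset G.V).filter (fun v => ¬ v ∈ X₁)).filter (· ∈ X₂) =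
        (univ : Finset G.V).filter (· ∈ X₂) := by
      ext x
      simp only [Finset.mem_filter, Finset.mem_univ, true_and]
      exact ⟨fun h => h.2, fun h => ⟨fun h1 => (hdisj.le_bot ⟨h1, h⟩ : _), h⟩⟩
    rw [e1] at hs2
    have hsum2 : ∑ v ∈ (univ : Finset G.V).filter (· ∈ X₂), exZ F v = -(k : ℤ) := by
      rw [e0] at hs2
      rw [hsum] at hs1
      linarith
    have hsum' : ∑ v ∈ (univ : Finset G.V).filter (· ∈ X₂),
        exZ ((univ : Finset G.E) \ F) v = (k : ℤ) := by
      rw [Finset.sum_congr rfl (fun v _ => hcomp v), Finset.sum_neg_distrib, hsum2]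
      ring
    obtain ⟨Q, hQends, hQsub, hQdisj⟩ :=
      decompose X₂ X₁ hdisj.symm k ((univ : Finset G.E) \ F) h0' hA' hB' hsum'
    refine ⟨P, Q, hPends, hQends, hPdisj, hQdisj, ?_⟩
    intro i j a hai haj
    have h1 := hPsub i a hai
    have h2 := hQsub j a haj
    rw [Finset.mem_sdiff] at h2
    exact h2.2 h1
  · exact Or.inr hcut
end

section
/- Let G be an Eulerian digraph and X₁, X₂ ⊆ V(G) disjoint. The maximum number of pairwise edge-disjoint directed paths from X₁ to X₂ equals the maximum number of pairwise edge-disjoint directed paths from X₂ to X₁. -/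
namespace EulerAux
variable (G : MDigraph)

lemma count_chain : ∀ (l : List G.E) (h : l ≠ []) (_ : l.Chain' (fun e f => G.head e = G.tail f)) (v : G.V),
    (l.countP (fun e => decide (G.tail e = v)) : ℤ) - l.countP (fun e => decide (G.head e = v))
      = (if G.tail (l.head h) = v then 1 else 0) - (if G.head (l.getLast h) = v then 1 else 0)
  | [], h, _, v => absurd rfl h
  | [e], _, _, v => by simp [List.countP_cons]; split_ifs <;> simp_all
  | e :: f :: r, _, hc, v => by
      have hc' := (List.isChain_cons_cons.1 hc)
      have ih := count_chain (f :: r) (by simp) hc'.2 v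
      have hhead : G.head e = G.tail f := hc'.1
      simp only [List.countP_cons, List.head_cons] at *
      rw [show ((f :: r).getLast (by simp : f :: r ≠ [])) = ((e :: f :: r).getLast (by simp)) from (List.getLast_cons (by simp)).symm] at ih
      push_cast at ih ⊢
      simp only [decide_eq_true_eq] at ih ⊢
      rw [hhead]
      split_ifs at ih ⊢ <;> simp_all <;> omega

def outd (s : Finset G.E) (v : G.V) : ℕ := (s.filter (fun e => G.tail e = v)).card
def ind (s : Finset G.E) (v : G.V) : ℕ := (s.filter (fun e => G.head e = v)).card

lemma outd_erase (s : Finset G.E) (e : G.E) (he : e ∈ s) (v : G.V) :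
    outd G (s.erase e) v = outd G s v - (if G.tail e = v then 1 else 0) := by
  unfold outd
  rw [Finset.filter_erase]
  split
  · rw [Finset.card_erase_of_mem (Finset.mem_filter.2 ⟨he, by assumption⟩)]
  · rw [Finset.erase_eq_of_notMem (by simp_all), Nat.sub_zero]

lemma ind_erase (s : Finset G.E) (e : G.E) (he : e ∈ s) (v : G.V) :
    ind G (s.erase e) v = ind G s v - (if G.head e = v then 1 else 0) := by
  unfold ind
  rw [Finset.filter_erase]
  split
  · rw [Finset.card_erase_of_mem (Finset.mem_filter.2 ⟨he, by assumption⟩)]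
  · rw [Finset.erase_eq_of_notMem (by simp_all), Nat.sub_zero]

lemma exists_maximal_trail (s : Finset G.E) :
    ∀ v : G.V, ind G s v < outd G s v →
    ∃ t : MDigraph.Trail G, t.edges.toFinset ⊆ s ∧ t.first = v ∧ outd G s t.last < ind G s t.last := by
  induction s using Finset.strongInduction with
  | _ s IH =>
    intro v hv
    have hne : (s.filter (fun e => G.tail e = v)).Nonempty := by
      rw [← Finset.card_pos]; unfold outd ind at hv; omega
    obtain ⟨e, he⟩ := hne
    rw [Finset.mem_filter] at he
    obtain ⟨hes, hev⟩ := he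
    set w := G.head e with hw
    have hsub : s.erase e ⊂ s := Finset.erase_ssubset hes
    have hie := ind_erase G s e hes
    have hoe := outd_erase G s e hes
    by_cases hcase : ind G (s.erase e) w < outd G (s.erase e) w
    · obtain ⟨t', ht'sub, ht'first, ht'last⟩ := IH (s.erase e) hsub w hcase
      have henot : e ∉ t'.edges := fun hmem =>
        (Finset.notMem_erase e s) (ht'sub (List.mem_toFinset.2 hmem))
      have hch : (e :: t'.edges).Chain' (fun a b => G.head a = G.tail b) := by
        rw [List.Chain', List.isChain_cons]
        refine ⟨?_, t'.chain⟩
        intro b hb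
        rw [List.head?_eq_head t'.nonempty] at hb
        cases hb
        exact ht'first.symm
      refine ⟨⟨e :: t'.edges, by simp, hch, List.nodup_cons.2 ⟨henot, t'.nodup⟩⟩, ?_, ?_, ?_⟩
      · intro x hx
        rw [List.mem_toFinset, List.mem_cons] at hx
        rcases hx with rfl | hx
        · exact hes
        · exact Finset.erase_subset e s (ht'sub (List.mem_toFinset.2 hx))
      · simpa [MDigraph.Trail.first] using hev
      · have hlast : G.head ((e :: t'.edges).getLast (by simp)) = t'.last := by
          rw [List.getLast_cons t'.nonempty]; rfl
        show outd G s (G.head ((e :: t'.edges).getLast _)) < ind G s (G.head _)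
        rw [hlast]
        set u := t'.last with hu
        have h1 := hie u
        have h2 := hoe u
        by_cases hut : G.tail e = u
        · have huv : v = u := hev ▸ hut
          subst huv
          rw [if_pos hut] at h2
          have hle : ind G (s.erase e) u ≤ ind G s u := by rw [h1]; split <;> omega
          omega
        · rw [if_neg hut] at h2
          have hle : ind G (s.erase e) u ≤ ind G s u := by rw [h1]; split <;> omega
          omega
    · have hindw : 1 ≤ ind G s w :=
        Finset.card_pos.2 ⟨e, Finset.mem_filter.2 ⟨hes, rfl⟩⟩
      refine ⟨⟨[e], by simp, List.isChain_singleton e, by simp⟩, by simpa using hes, by simpa [MDigraph.Trail.first], ?_⟩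
      show outd G s w < ind G s w
      have h1 := hie w
      have h2 := hoe w
      rw [if_pos rfl] at h1
      have hc2 : outd G (s.erase e) w ≤ ind G (s.erase e) w := not_lt.1 hcase
      by_cases hut : G.tail e = w
      · have huv : v = w := hev ▸ hut
        rw [if_pos hut] at h2
        rw [huv] at hv
        omega
      · rw [if_neg hut] at h2
        omega

lemma card_filter_toFinset (l : List G.E) (hl : l.Nodup) (p : G.E → Prop) [DecidablePred p] :
    (l.toFinset.filter p).card = l.countP (fun e => decide (p e)) := by
  have : l.toFinset.filter p = (l.filter (fun e => decide (p e))).toFinset := by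
    ext x; simp
  rw [this, List.card_toFinset, (hl.filter _).dedup, List.countP_eq_length_filter]

lemma outd_sdiff (s F : Finset G.E) (hF : F ⊆ s) (v : G.V) :
    outd G (s \ F) v = outd G s v - outd G F v := by
  unfold outd
  have h : (s \ F).filter (fun e => G.tail e = v)
      = s.filter (fun e => G.tail e = v) \ F.filter (fun e => G.tail e = v) := by
    ext x; simp only [Finset.mem_filter, Finset.mem_sdiff]; tauto
  rw [h, Finset.card_sdiff_of_subset (Finset.filter_subset_filter _ hF)]

lemma ind_sdiff (s F : Finset G.E) (hF : F ⊆ s) (v : G.V) :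
    ind G (s \ F) v = ind G s v - ind G F v := by
  unfold ind
  have h : (s \ F).filter (fun e => G.head e = v)
      = s.filter (fun e => G.head e = v) \ F.filter (fun e => G.head e = v) := by
    ext x; simp only [Finset.mem_filter, Finset.mem_sdiff]; tauto
  rw [h, Finset.card_sdiff_of_subset (Finset.filter_subset_filter _ hF)]

lemma outd_mono (s F : Finset G.E) (hF : F ⊆ s) (v : G.V) : outd G F v ≤ outd G s v :=
  Finset.card_le_card (Finset.filter_subset_filter _ hF)

lemma ind_mono (s F : Finset G.E) (hF : F ⊆ s) (v : G.V) : ind G F v ≤ ind G s v :=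
  Finset.card_le_card (Finset.filter_subset_filter _ hF)

/-- Count balance for a trail: out-count minus in-count is +1 at first, -1 at last. -/
lemma trail_balance (t : G.Trail) (w : G.V) :
    (outd G t.edges.toFinset w : ℤ) - ind G t.edges.toFinset w
      = (if t.first = w then 1 else 0) - (if t.last = w then 1 else 0) := by
  unfold outd ind
  rw [card_filter_toFinset G t.edges t.nodup, card_filter_toFinset G t.edges t.nodup]
  exact count_chain G t.edges t.nonempty t.chain w

lemma extract (X₁ X₂ : Set G.V) :
    ∀ (k : ℕ) (s : Finset G.E),
    (∀ v, ind G s v < outd G s v → v ∈ X₂) →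
    (∀ v, outd G s v < ind G s v → v ∈ X₁) →
    k ≤ ∑ v, (outd G s v - ind G s v) →
    ∃ P : Fin k → G.Trail, (∀ i, (P i).first ∈ X₂ ∧ (P i).last ∈ X₁) ∧
      (∀ i j, i ≠ j → (P i).edges.Disjoint (P j).edges) ∧
      (∀ i, (P i).edges.toFinset ⊆ s) := by
  intro k
  induction k with
  | zero =>
    intro s _ _ _
    exact ⟨Fin.elim0, fun i => i.elim0, fun i => i.elim0, fun i => i.elim0⟩
  | succ k IH =>
    intro s h1 h2 hsum
    have hpos : (∑ v, (outd G s v - ind G s v)) ≠ 0 := by omega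
    obtain ⟨v, -, hv0⟩ := Finset.exists_ne_zero_of_sum_ne_zero hpos
    have hv : ind G s v < outd G s v := by omega
    have hvX : v ∈ X₂ := h1 v hv
    obtain ⟨t, htsub, htfirst, htlast⟩ := exists_maximal_trail G s v hv
    have huX : t.last ∈ X₁ := h2 t.last htlast
    have hvu : v ≠ t.last := by intro h; rw [← h] at htlast; omega
    set s' := s \ t.edges.toFinset with hs'
    have hbal := trail_balance G t
    rw [htfirst] at hbal
    have hT : ∀ w, outd G t.edges.toFinset w ≤ outd G s w := outd_mono G s _ htsub
    have hH : ∀ w, ind G t.edges.toFinset w ≤ ind G s w := ind_mono G s _ htsub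
    have hso : ∀ w, outd G s' w = outd G s w - outd G t.edges.toFinset w := outd_sdiff G s _ htsub
    have hsi : ∀ w, ind G s' w = ind G s w - ind G t.edges.toFinset w := ind_sdiff G s _ htsub
    have main : ∀ w, (ind G s' w < outd G s' w → ind G s w < outd G s w ∨ w = v) ∧
        (outd G s' w < ind G s' w → outd G s w < ind G s w ∨ w = t.last) ∧
        (outd G s w - ind G s w = (outd G s' w - ind G s' w) + if w = v then 1 else 0) := by
      intro w
      have hb := hbal w
      have h3 := hT w; have h4 := hH w; have h5 := hso w; have h6 := hsi w
      by_cases hwv : w = v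
      · subst hwv
        rw [if_pos rfl] at hb ⊢
        rw [if_neg (fun h : t.last = w => hvu h.symm)] at hb
        refine ⟨fun _ => Or.inl hv, fun h => ?_, ?_⟩ <;> omega
      · rw [if_neg hwv]
        rw [if_neg (fun h : v = w => hwv h.symm)] at hb
        by_cases hwu : w = t.last
        · subst hwu
          rw [if_pos rfl] at hb
          refine ⟨fun h => ?_, fun _ => Or.inr rfl, ?_⟩ <;> omega
        · rw [if_neg (fun h : t.last = w => hwu h.symm)] at hb
          refine ⟨fun h => Or.inl (by omega), fun h => Or.inl (by omega), by omega⟩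
    have hsumeq : ∑ w, (outd G s w - ind G s w)
        = (∑ w, (outd G s' w - ind G s' w)) + 1 := by
      have h := Finset.sum_congr rfl (fun w (_ : w ∈ Finset.univ) => (main w).2.2)
      rw [h, Finset.sum_add_distrib]
      simp [Finset.sum_ite_eq]
    have hsum' : k ≤ ∑ w, (outd G s' w - ind G s' w) := by omega
    have h1' : ∀ w, ind G s' w < outd G s' w → w ∈ X₂ := by
      intro w hw
      rcases (main w).1 hw with h | rfl
      · exact h1 w h
      · exact hvX
    have h2' : ∀ w, outd G s' w < ind G s' w → w ∈ X₁ := by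
      intro w hw
      rcases (main w).2.1 hw with h | rfl
      · exact h2 w h
      · exact huX
    obtain ⟨Q, hQmem, hQdis, hQsub⟩ := IH s' h1' h2' hsum'
    have htQ : ∀ j, t.edges.Disjoint (Q j).edges := by
      intro j a hat haq
      exact (Finset.mem_sdiff.1 (hQsub j (List.mem_toFinset.2 haq))).2 (List.mem_toFinset.2 hat)
    refine ⟨Fin.cons t Q, ?_, ?_, ?_⟩
    · intro i
      refine Fin.cases ?_ ?_ i
      · simp only [Fin.cons_zero]
        exact ⟨htfirst ▸ hvX, huX⟩
      · intro j; simp only [Fin.cons_succ]; exact hQmem j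
    · intro i j hij
      induction i using Fin.cases with
      | zero =>
        induction j using Fin.cases with
        | zero => exact absurd rfl hij
        | succ j' => simp only [Fin.cons_zero, Fin.cons_succ]; exact htQ j'
      | succ i' =>
        induction j using Fin.cases with
        | zero => simp only [Fin.cons_zero, Fin.cons_succ]; exact (htQ i').symm
        | succ j' =>
          simp only [Fin.cons_succ]
          exact hQdis i' j' (fun h => hij (by rw [h]))
    · intro i
      refine Fin.cases ?_ ?_ i
      · simpa using htsub
      · intro j; simp only [Fin.cons_succ]
        exact (hQsub j).trans (Finset.sdiff_subset)

lemma transfer (hG : G.Eulerian) (X₁ X₂ : Set G.V) (hdisj : Disjoint X₁ X₂) (k : ℕ)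
    (P : Fin k → G.Trail) (hmem : ∀ i, (P i).first ∈ X₁ ∧ (P i).last ∈ X₂)
    (hdis : ∀ i j, i ≠ j → (P i).edges.Disjoint (P j).edges) :
    ∃ Q : Fin k → G.Trail, (∀ i, (Q i).first ∈ X₂ ∧ (Q i).last ∈ X₁) ∧
      ∀ i j, i ≠ j → (Q i).edges.Disjoint (Q j).edges := by
  classical
  set F := Finset.univ.biUnion (fun i : Fin k => (P i).edges.toFinset) with hF
  set s := Finset.univ \ F with hs
  have heu : ∀ v, ind G Finset.univ v = outd G Finset.univ v := by
    intro v
    have h := hG v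
    rwa [Nat.card_eq_fintype_card, Nat.card_eq_fintype_card,
      Fintype.card_subtype, Fintype.card_subtype] at h
  have hFsub : F ⊆ Finset.univ := Finset.subset_univ F
  have hdisjt : ∀ i j : Fin k, i ≠ j →
      Disjoint ((P i).edges.toFinset) ((P j).edges.toFinset) := fun i j hij =>
    List.disjoint_toFinset_iff_disjoint.2 (hdis i j hij)
  have hFo : ∀ v, outd G F v = ∑ i, outd G (P i).edges.toFinset v := by
    intro v
    unfold outd
    rw [Finset.filter_biUnion, Finset.card_biUnion]
    intro i _ j _ hij
    exact Finset.disjoint_filter_filter (hdisjt i j hij)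
  have hFi : ∀ v, ind G F v = ∑ i, ind G (P i).edges.toFinset v := by
    intro v
    unfold ind
    rw [Finset.filter_biUnion, Finset.card_biUnion]
    intro i _ j _ hij
    exact Finset.disjoint_filter_filter (hdisjt i j hij)
  set a : G.V → ℕ := fun v => (Finset.univ.filter (fun i => (P i).last = v)).card with ha
  set b : G.V → ℕ := fun v => (Finset.univ.filter (fun i => (P i).first = v)).card with hb
  have hab : ∀ v, (ind G F v : ℤ) - outd G F v = a v - b v := by
    intro v
    rw [hFo, hFi]
    push_cast
    rw [← Finset.sum_sub_distrib]
    have h : ∀ i ∈ Finset.univ, (ind G (P i).edges.toFinset v : ℤ) - outd G (P i).edges.toFinset v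
        = (if (P i).last = v then (1:ℤ) else 0) - (if (P i).first = v then 1 else 0) := by
      intro i _
      have hbal := trail_balance G (P i) v
      linarith
    rw [Finset.sum_congr rfl h, Finset.sum_sub_distrib, Finset.sum_boole, Finset.sum_boole]
  have hso : ∀ v, outd G s v = outd G Finset.univ v - outd G F v := outd_sdiff G _ F hFsub
  have hsi : ∀ v, ind G s v = ind G Finset.univ v - ind G F v := ind_sdiff G _ F hFsub
  have hTo : ∀ v, outd G F v ≤ outd G Finset.univ v := outd_mono G _ F hFsub
  have hTi : ∀ v, ind G F v ≤ ind G Finset.univ v := ind_mono G _ F hFsub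
  have hmain : ∀ v, (outd G s v : ℤ) - ind G s v = a v - b v := by
    intro v
    have e1 := hab v; have e2 := heu v; have e3 := hTo v; have e4 := hTi v
    rw [hso, hsi]
    omega
  have haX : ∀ v, 0 < a v → v ∈ X₂ := by
    intro v hv
    obtain ⟨i, hi⟩ := Finset.card_pos.1 hv
    exact (Finset.mem_filter.1 hi).2 ▸ (hmem i).2
  have hbX : ∀ v, 0 < b v → v ∈ X₁ := by
    intro v hv
    obtain ⟨i, hi⟩ := Finset.card_pos.1 hv
    exact (Finset.mem_filter.1 hi).2 ▸ (hmem i).1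
  have hb0 : ∀ v, v ∈ X₂ → b v = 0 := by
    intro v hv
    by_contra h
    exact Set.disjoint_left.1 hdisj (hbX v (Nat.pos_of_ne_zero h)) hv
  have hc1 : ∀ v, ind G s v < outd G s v → v ∈ X₂ := by
    intro v h
    refine haX v ?_
    have := hmain v; omega
  have hc2 : ∀ v, outd G s v < ind G s v → v ∈ X₁ := by
    intro v h
    refine hbX v ?_
    have := hmain v; omega
  have hsum : k ≤ ∑ v, (outd G s v - ind G s v) := by
    have hk : k = ∑ v, a v := by
      have h := Finset.card_eq_sum_card_fiberwise
        (f := fun i : Fin k => (P i).last) (s := Finset.univ) (t := Finset.univ)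
        (fun i _ => Finset.mem_univ _)
      simpa [ha] using h
    rw [hk]
    refine Finset.sum_le_sum ?_
    intro v _
    by_cases hva : 0 < a v
    · have hbv := hb0 v (haX v hva)
      have := hmain v
      omega
    · omega
  obtain ⟨Q, hQmem, hQdis, -⟩ := extract G X₁ X₂ k s hc1 hc2 hsum
  exact ⟨Q, hQmem, hQdis⟩

end EulerAux


theorem stmt3 (G : MDigraph) (hG : G.Eulerian) (X₁ X₂ : Set G.V)
    (hdisj : Disjoint X₁ X₂) :
    sSup {n : ℕ | ∃ P : Fin n → G.Trail,
        (∀ i, (P i).first ∈ X₁ ∧ (P i).last ∈ X₂) ∧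
        ∀ i j, i ≠ j → (P i).edges.Disjoint (P j).edges}
      = sSup {n : ℕ | ∃ P : Fin n → G.Trail,
        (∀ i, (P i).first ∈ X₂ ∧ (P i).last ∈ X₁) ∧
        ∀ i j, i ≠ j → (P i).edges.Disjoint (P j).edges} := by
  congr 1
  ext n
  constructor
  · rintro ⟨P, hmem, hdis⟩
    obtain ⟨Q, hQmem, hQdis⟩ := EulerAux.transfer G hG X₁ X₂ hdisj n P hmem hdis
    exact ⟨Q, hQmem, hQdis⟩
  · rintro ⟨P, hmem, hdis⟩
    obtain ⟨Q, hQmem, hQdis⟩ := EulerAux.transfer G hG X₂ X₁ hdisj.symm n P hmem hdis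
    exact ⟨Q, hQmem, hQdis⟩
end

section
/- Strong immersion defines a partial order on (isomorphism classes of) Eulerian digraphs: it is reflexive and transitive, and if G strongly immerses H and H strongly immerses G, then G and H are isomorphic. -/
/-- An immersion of `H` into `G`: vertices map injectively to vertices, edges map to
pairwise edge-disjoint directed trails respecting heads and tails. -/
structure MDigraph.Immersion (H G : MDigraph) : Type where
  vmap : H.V → G.V
  vinj : Function.Injective vmap
  emap : H.E → G.Trail
  first_eq : ∀ e : H.E, (emap e).first = vmap (H.tail e)
  last_eq : ∀ e : H.E, (emap e).last = vmap (H.head e)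
  edisj : ∀ e f : H.E, e ≠ f → (emap e).edges.Disjoint (emap f).edges

/-- A strong immersion: moreover no image vertex occurs as an internal vertex
of any assigned trail. -/
structure MDigraph.StrongImmersion (H G : MDigraph) extends MDigraph.Immersion H G where
  strong : ∀ (e : H.E) (v : H.V), vmap v ∉ (emap e).internals

/-- An isomorphism of directed multigraphs. -/
structure MDigraph.Iso (G H : MDigraph) : Type where
  vequiv : G.V ≃ H.V
  eequiv : G.E ≃ H.E
  tail_eq : ∀ e : G.E, H.tail (eequiv e) = vequiv (G.tail e)
  head_eq : ∀ e : G.E, H.head (eequiv e) = vequiv (G.head e)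

namespace MDigraph

variable {G₁ G₂ G₃ : MDigraph}

private def singleTrail (G : MDigraph) (e : G.E) : G.Trail where
  edges := [e]
  nonempty := by simp
  chain := List.isChain_singleton e
  nodup := List.nodup_singleton e

private def reflSI (G : MDigraph) : G.StrongImmersion G where
  vmap := id
  vinj := fun _ _ h => h
  emap := singleTrail G
  first_eq := fun _ => rfl
  last_eq := fun _ => rfl
  edisj := fun e f h a ha hb => by
    simp only [singleTrail, List.mem_singleton] at ha hb
    exact h (ha.symm.trans hb)
  strong := fun e v => by simp [singleTrail, Trail.internals]

private lemma not_nil_mem (ψ : Immersion G₂ G₃) (t : G₂.Trail) :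
    [] ∉ t.edges.map fun f => (ψ.emap f).edges := by
  intro h
  obtain ⟨f, _, hf⟩ := List.mem_map.1 h
  exact (ψ.emap f).nonempty hf

private def compTrail (ψ : Immersion G₂ G₃) (t : G₂.Trail) : G₃.Trail where
  edges := (t.edges.map fun f => (ψ.emap f).edges).flatten
  nonempty := by
    intro h
    rw [List.flatten_eq_nil_iff] at h
    exact (ψ.emap (t.edges.head t.nonempty)).nonempty
      (h _ (List.mem_map_of_mem (List.head_mem t.nonempty)))
  chain := by
    show List.IsChain _ _
    rw [List.isChain_flatten (not_nil_mem ψ t)]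
    constructor
    · intro l hl
      obtain ⟨f, _, rfl⟩ := List.mem_map.1 hl
      exact (ψ.emap f).chain
    · rw [List.isChain_map]
      refine List.IsChain.imp ?_ t.chain
      intro f f' h x hx y hy
      obtain ⟨hxne, rfl⟩ := List.mem_getLast?_eq_getLast hx
      have hl' := (ψ.emap f').nonempty
      rw [List.head?_eq_head hl', Option.mem_def, Option.some.injEq] at hy
      subst hy
      show (ψ.emap f).last = (ψ.emap f').first
      rw [ψ.last_eq, ψ.first_eq, h]
  nodup := by
    rw [List.nodup_flatten]
    constructor
    · intro l hl
      obtain ⟨f, _, rfl⟩ := List.mem_map.1 hl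
      exact (ψ.emap f).nodup
    · exact List.Pairwise.map _ (fun f f' h => ψ.edisj f f' h) t.nodup

private lemma compTrail_first (ψ : Immersion G₂ G₃) (t : G₂.Trail) :
    (compTrail ψ t).first = ψ.vmap t.first := by
  obtain ⟨f, fs, hfs⟩ := List.exists_cons_of_ne_nil t.nonempty
  have hf : t.edges.head t.nonempty = f := by
    have h4 : t.edges.head? = some f := by rw [hfs]; rfl
    rw [List.head?_eq_head t.nonempty, Option.some_inj] at h4
    exact h4
  have key : (compTrail ψ t).edges.head? = (ψ.emap f).edges.head? := by
    show ((t.edges.map fun g => (ψ.emap g).edges).flatten).head? = _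
    rw [hfs]
    simp only [List.map_cons, List.flatten_cons]
    rw [List.head?_append_of_ne_nil _ (ψ.emap f).nonempty]
  have h2 := (compTrail ψ t).nonempty
  have h3 := (ψ.emap f).nonempty
  rw [List.head?_eq_head h2, List.head?_eq_head h3, Option.some_inj] at key
  show G₃.tail ((compTrail ψ t).edges.head h2) = _
  rw [key]
  show (ψ.emap f).first = _
  rw [ψ.first_eq]
  unfold Trail.first
  rw [hf]

private lemma compTrail_getLast? (ψ : Immersion G₂ G₃) (t : G₂.Trail) :
    (compTrail ψ t).edges.getLast?
      = (ψ.emap (t.edges.getLast t.nonempty)).edges.getLast? := by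
  show ((t.edges.map fun g => (ψ.emap g).edges).flatten).getLast? = _
  conv_lhs => rw [← List.dropLast_append_getLast t.nonempty]
  rw [List.map_append, List.flatten_append]
  rw [List.getLast?_append_of_ne_nil _ (by
    simp only [List.map_cons, List.map_nil, List.flatten_cons, List.flatten_nil,
      List.append_nil]
    exact (ψ.emap _).nonempty)]
  simp

private lemma compTrail_last (ψ : Immersion G₂ G₃) (t : G₂.Trail) :
    (compTrail ψ t).last = ψ.vmap t.last := by
  have key := compTrail_getLast? ψ t
  have h2 := (compTrail ψ t).nonempty
  have h3 := (ψ.emap (t.edges.getLast t.nonempty)).nonempty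
  rw [List.getLast?_eq_getLast_of_ne_nil h2, List.getLast?_eq_getLast_of_ne_nil h3,
    Option.some_inj] at key
  show G₃.head ((compTrail ψ t).edges.getLast h2) = _
  rw [key]
  show (ψ.emap _).last = _
  rw [ψ.last_eq]
  rfl

private lemma compTrail_internals (ψ : Immersion G₂ G₃) (t : G₂.Trail) {x : G₃.V}
    (hx : x ∈ (compTrail ψ t).internals) :
    (∃ f ∈ t.edges, x ∈ (ψ.emap f).internals) ∨
      ∃ f ∈ t.edges.dropLast, x = ψ.vmap (G₂.head f) := by
  obtain ⟨g, hg, rfl⟩ := List.mem_map.1 hx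
  have hgmem : g ∈ (compTrail ψ t).edges := (List.dropLast_sublist _).mem hg
  obtain ⟨l, hl, hgl⟩ := List.mem_flatten.1 hgmem
  obtain ⟨f, hf, rfl⟩ := List.mem_map.1 hl
  by_cases hcase : g ∈ (ψ.emap f).edges.dropLast
  · exact Or.inl ⟨f, hf, List.mem_map_of_mem hcase⟩
  · have hgl' : g = (ψ.emap f).edges.getLast (ψ.emap f).nonempty := by
      rw [← List.dropLast_append_getLast (ψ.emap f).nonempty, List.mem_append] at hgl
      rcases hgl with h | h
      · exact absurd h hcase
      · simpa using h
    have hfdl : f ∈ t.edges.dropLast := by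
      by_contra hfd
      have hflast : f = t.edges.getLast t.nonempty := by
        rw [← List.dropLast_append_getLast t.nonempty, List.mem_append] at hf
        rcases hf with h | h
        · exact absurd h hfd
        · simpa using h
      have key := compTrail_getLast? ψ t
      have h2 := (compTrail ψ t).nonempty
      have h3 := (ψ.emap (t.edges.getLast t.nonempty)).nonempty
      rw [List.getLast?_eq_getLast_of_ne_nil h2, List.getLast?_eq_getLast_of_ne_nil h3,
        Option.some_inj] at key
      have hgLast : g = (compTrail ψ t).edges.getLast h2 := by
        rw [key, hgl']
        congr 1; rw [hflast]
      have hnd := (compTrail ψ t).nodup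
      rw [← List.dropLast_append_getLast h2, List.nodup_append] at hnd
      exact hnd.2.2 g hg g (List.mem_singleton.2 hgLast) rfl
    refine Or.inr ⟨f, hfdl, ?_⟩
    rw [hgl']
    exact ψ.last_eq f

private def transSI (φ : G₁.StrongImmersion G₂) (ψ : G₂.StrongImmersion G₃) :
    G₁.StrongImmersion G₃ where
  vmap := ψ.vmap ∘ φ.vmap
  vinj := ψ.vinj.comp φ.vinj
  emap := fun e => compTrail ψ.toImmersion (φ.emap e)
  first_eq := fun e => by rw [compTrail_first]; show ψ.vmap _ = _; rw [φ.first_eq]; rfl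
  last_eq := fun e => by rw [compTrail_last]; show ψ.vmap _ = _; rw [φ.last_eq]; rfl
  edisj := fun e e' hne g hg hg' => by
    obtain ⟨l, hl, hgl⟩ := List.mem_flatten.1 hg
    obtain ⟨f, hf, rfl⟩ := List.mem_map.1 hl
    obtain ⟨l', hl', hgl'⟩ := List.mem_flatten.1 hg'
    obtain ⟨f', hf', rfl⟩ := List.mem_map.1 hl'
    rcases eq_or_ne f f' with rfl | hff
    · exact φ.edisj e e' hne hf hf'
    · exact ψ.edisj f f' hff hgl hgl'
  strong := fun e v hx => by
    rcases compTrail_internals ψ.toImmersion (φ.emap e) hx with ⟨f, hf, hint⟩ | ⟨f, hf, heq⟩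
    · exact ψ.strong f (φ.vmap v) hint
    · have hv : φ.vmap v = G₂.head f := ψ.vinj heq
      exact φ.strong e v (by rw [hv]; exact List.mem_map_of_mem hf)

private lemma antisym (φ : G₁.StrongImmersion G₂) (ψ : G₂.StrongImmersion G₁) :
    Nonempty (G₁.Iso G₂) := by
  classical
  have hV : Fintype.card G₁.V = Fintype.card G₂.V :=
    le_antisymm (Fintype.card_le_of_injective _ φ.vinj)
      (Fintype.card_le_of_injective _ ψ.vinj)
  have hdinj : ∀ {H K : MDigraph} (σ : H.StrongImmersion K),
      Function.Injective (fun e => (σ.emap e).edges.head (σ.emap e).nonempty) := by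
    intro H K σ e e' h
    by_contra hne
    have h' : (σ.emap e).edges.head (σ.emap e).nonempty
        = (σ.emap e').edges.head (σ.emap e').nonempty := h
    refine σ.edisj e e' hne (List.head_mem (σ.emap e).nonempty) ?_
    rw [h']
    exact List.head_mem _
  have hE : Fintype.card G₁.E = Fintype.card G₂.E :=
    le_antisymm (Fintype.card_le_of_injective _ (hdinj φ))
      (Fintype.card_le_of_injective _ (hdinj ψ))
  have h1 : ∀ e : G₁.E, 1 ≤ (φ.emap e).edges.length := fun e =>
    List.length_pos_iff.2 (φ.emap e).nonempty
  have hlen : ∀ e : G₁.E, (φ.emap e).edges.length = 1 := by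
    by_contra hover
    push_neg at hover
    obtain ⟨e₀, he₀⟩ := hover
    have hlt : 1 < (φ.emap e₀).edges.length := lt_of_le_of_ne (h1 e₀) (Ne.symm he₀)
    have hinj2 : Function.Injective
        (fun p : Σ e : G₁.E, Fin (φ.emap e).edges.length => (φ.emap p.1).edges.get p.2) := by
      rintro ⟨e, i⟩ ⟨e', j⟩ h
      dsimp only at h
      rcases eq_or_ne e e' with rfl | hne
      · have : i = j := ((φ.emap e).nodup.get_inj_iff).1 h
        rw [this]
      · exfalso
        refine φ.edisj e e' hne (a := (φ.emap e).edges.get i) (List.get_mem _ i) ?_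
        rw [h]
        exact List.get_mem _ j
    have hsum : ∑ e : G₁.E, (φ.emap e).edges.length ≤ Fintype.card G₂.E := by
      have := Fintype.card_le_of_injective _ hinj2
      simpa [Fintype.card_sigma] using this
    have hlb : Fintype.card G₁.E < ∑ e : G₁.E, (φ.emap e).edges.length := by
      have : ∑ _e : G₁.E, 1 < ∑ e : G₁.E, (φ.emap e).edges.length :=
        Finset.sum_lt_sum (fun i _ => h1 i) ⟨e₀, Finset.mem_univ _, hlt⟩
      simpa using this
    have := hlb.trans_le hsum
    omega
  have hsingle : ∀ e, (φ.emap e).edges = [(φ.emap e).edges.head (φ.emap e).nonempty] := by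
    intro e
    obtain ⟨a, ha⟩ := List.length_eq_one_iff.1 (hlen e)
    have hh : (φ.emap e).edges.head (φ.emap e).nonempty = a := by
      have h5 : (φ.emap e).edges.head? = some a := by rw [ha]; rfl
      rwa [List.head?_eq_head (φ.emap e).nonempty, Option.some_inj] at h5
    rw [hh]
    exact ha
  have hbij : Function.Bijective (fun e => (φ.emap e).edges.head (φ.emap e).nonempty) :=
    (Fintype.bijective_iff_injective_and_card _).2 ⟨hdinj φ, hE⟩
  have vbij : Function.Bijective φ.vmap :=
    (Fintype.bijective_iff_injective_and_card _).2 ⟨φ.vinj, hV⟩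
  refine ⟨⟨Equiv.ofBijective _ vbij, Equiv.ofBijective _ hbij, ?_, ?_⟩⟩
  · intro e
    show G₂.tail ((φ.emap e).edges.head _) = φ.vmap (G₁.tail e)
    exact φ.first_eq e
  · intro e
    show G₂.head ((φ.emap e).edges.head _) = φ.vmap (G₁.head e)
    have key : (φ.emap e).edges.getLast (φ.emap e).nonempty
        = (φ.emap e).edges.head (φ.emap e).nonempty := by
      have hk : (φ.emap e).edges.getLast? = (φ.emap e).edges.head? := by
        rw [hsingle e]
        simp
      rwa [List.getLast?_eq_getLast_of_ne_nil (φ.emap e).nonempty,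
        List.head?_eq_head (φ.emap e).nonempty, Option.some_inj] at hk
    rw [← key]
    exact φ.last_eq e

end MDigraph


theorem stmt7 :
    (∀ G : MDigraph, G.Eulerian → Nonempty (MDigraph.StrongImmersion G G)) ∧
      (∀ G₁ G₂ G₃ : MDigraph, G₁.Eulerian → G₂.Eulerian → G₃.Eulerian →
        Nonempty (MDigraph.StrongImmersion G₁ G₂) →
        Nonempty (MDigraph.StrongImmersion G₂ G₃) →
        Nonempty (MDigraph.StrongImmersion G₁ G₃)) ∧
      (∀ G₁ G₂ : MDigraph, G₁.Eulerian → G₂.Eulerian →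
        Nonempty (MDigraph.StrongImmersion G₁ G₂) →
        Nonempty (MDigraph.StrongImmersion G₂ G₁) →
        Nonempty (MDigraph.Iso G₁ G₂)) := by
  refine ⟨fun G _ => ⟨MDigraph.reflSI G⟩, fun G₁ G₂ G₃ _ _ _ h1 h2 => ?_, fun G₁ G₂ _ _ h1 h2 => ?_⟩
  · obtain ⟨φ⟩ := h1; obtain ⟨ψ⟩ := h2; exact ⟨MDigraph.transSI φ ψ⟩
  · obtain ⟨φ⟩ := h1; obtain ⟨ψ⟩ := h2; exact MDigraph.antisym φ ψ
end

section
/- Carving width is monotone under immersion for Eulerian digraphs: if G and H are Eulerian digraphs and G immerses H, then the carving width of H is at most the carving width of G. In particular, carving width does not increase when taking Eulerian subgraphs, nor when splitting off an edge pair at a vertex. -/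
/-- A carving of `G`: a cubic tree together with an injective labelling of the
vertices of `G` by leaves of the tree. -/
structure Carving (G : MDigraph) : Type 1 where
  VT : Type
  [fintVT : Fintype VT]
  [decVT : DecidableEq VT]
  T : SimpleGraph VT
  [decAdj : DecidableRel T.Adj]
  isTree : T.IsTree
  cubic : ∀ x : VT, T.degree x = 1 ∨ T.degree x = 3
  label : G.V → VT
  label_leaf : ∀ v : G.V, T.degree (label v) = 1
  label_inj : Function.Injective label

/-- An edge `a` of `G` crosses the bipartition induced by the tree edge `{u, v}`. -/
def Carving.sep {G : MDigraph} (c : Carving G) (u v : c.VT) (a : G.E) : Prop :=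
  ((c.T.deleteEdges {s(u, v)}).Reachable (c.label (G.tail a)) u ∧
      (c.T.deleteEdges {s(u, v)}).Reachable (c.label (G.head a)) v) ∨
    ((c.T.deleteEdges {s(u, v)}).Reachable (c.label (G.tail a)) v ∧
      (c.T.deleteEdges {s(u, v)}).Reachable (c.label (G.head a)) u)

/-- The width of the tree edge `{u, v}` in the carving `c`. -/
noncomputable def Carving.cross {G : MDigraph} (c : Carving G) (u v : c.VT) : ℕ :=
  Nat.card {a : G.E // c.sep u v a}

/-- The width of a carving: the maximum width of an edge of the tree. -/
noncomputable def Carving.width {G : MDigraph} (c : Carving G) : ℕ :=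
  sSup {n : ℕ | ∃ u v : c.VT, c.T.Adj u v ∧ n = c.cross u v}

/-- The carving width of `G`: the minimum width of a carving of `G`. -/
noncomputable def carvingWidth (G : MDigraph) : ℕ :=
  sInf {n : ℕ | ∃ c : Carving G, c.width = n}

/-- `H` is (isomorphic to) a subgraph of `G`. -/
def IsSubgraph (H G : MDigraph) : Prop :=
  ∃ (fv : H.V → G.V) (fe : H.E → G.E),
    Function.Injective fv ∧ Function.Injective fe ∧
      (∀ e : H.E, G.tail (fe e) = fv (H.tail e)) ∧
      (∀ e : H.E, G.head (fe e) = fv (H.head e))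

/-- The concrete digraph obtained from `G` by splitting off the edge pair `(e, e')`:
`e` and `e'` are removed and replaced by a single new edge from `tail e` to `head e'`. -/
def splitGraph (G : MDigraph) (e e' : G.E) : MDigraph where
  V := G.V
  E := {x : G.E // x ≠ e ∧ x ≠ e'} ⊕ Unit
  tail := Sum.elim (fun x => G.tail x.val) (fun _ => G.tail e)
  head := Sum.elim (fun x => G.head x.val) (fun _ => G.head e')

set_option linter.unusedSectionVars false
set_option linter.unreachableTactic false
set_option linter.unnecessarySeqFocus false
set_option linter.unusedTactic false
set_option linter.unusedVariables false

section Aux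

open SimpleGraph

/-! ### The pendant extension of a tree -/

variable {A : Type} [Fintype A] [DecidableEq A]

/-- Attach two pendant vertices to the vertex `ℓ` of `T`. -/
def pend (T : SimpleGraph A) (ℓ : A) : SimpleGraph (A ⊕ Bool) where
  Adj x y := match x, y with
    | .inl a, .inl b => T.Adj a b
    | .inl a, .inr _ => a = ℓ
    | .inr _, .inl b => b = ℓ
    | .inr _, .inr _ => False
  symm := ⟨by rintro (a|a) (b|b) h <;> simp_all <;> exact h.symm⟩
  loopless := ⟨by rintro (a|a) h <;> simp_all <;> exact T.irrefl h⟩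

variable {T : SimpleGraph A} [DecidableRel T.Adj] {ℓ : A}

instance : DecidableRel (pend T ℓ).Adj := by
  rintro (a|a) (b|b) <;> unfold pend <;> dsimp <;> infer_instance

@[simp] lemma pend_adj_inl_inl {a b : A} : (pend T ℓ).Adj (.inl a) (.inl b) ↔ T.Adj a b :=
  Iff.rfl

@[simp] lemma pend_adj_inl_inr {a : A} {t : Bool} :
    (pend T ℓ).Adj (.inl a) (.inr t) ↔ a = ℓ := Iff.rfl

@[simp] lemma pend_adj_inr_inl {b : A} {t : Bool} :
    (pend T ℓ).Adj (.inr t) (.inl b) ↔ b = ℓ := Iff.rfl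

@[simp] lemma pend_adj_inr_inr {s t : Bool} :
    ¬ (pend T ℓ).Adj (.inr s) (.inr t) := by rintro h; exact h

/-- The inclusion homomorphism. -/
def pendHom (T : SimpleGraph A) (ℓ : A) : T →g pend T ℓ where
  toFun := Sum.inl
  map_rel' := fun h => h

lemma pend_connected (hT : T.Connected) : (pend T ℓ).Connected := by
  have hreach : ∀ x : A ⊕ Bool, (pend T ℓ).Reachable x (.inl ℓ) := by
    rintro (a|t)
    · exact (hT.preconnected a ℓ).map (pendHom T ℓ)
    · exact (Adj.reachable (by simp))
  haveI : Nonempty (A ⊕ Bool) := ⟨.inl ℓ⟩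
  exact ⟨fun x y => (hreach x).trans (hreach y).symm⟩

/-- Projecting a walk of the pendant extension between old vertices to the old tree. -/
lemma pend_proj : ∀ (n : ℕ) {a b : A} (p : (pend T ℓ).Walk (.inl a) (.inl b)),
    p.length ≤ n → ∃ q : T.Walk a b, ∀ e ∈ q.edges, e.map Sum.inl ∈ p.edges := by
  intro n
  induction n with
  | zero =>
    intro a b p hp
    cases p with
    | nil => exact ⟨Walk.nil, by simp⟩
    | cons h q => simp at hp
  | succ n ih =>
    intro a b p hp
    cases p with
    | nil => exact ⟨Walk.nil, by simp⟩
    | @cons _ y _ h p' =>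
      cases y with
      | inl c =>
        obtain ⟨q, hq⟩ := ih p' (by simp at hp; omega)
        have h2 : T.Adj a c := h
        refine ⟨Walk.cons h2 q, ?_⟩
        intro e he
        rw [Walk.edges_cons] at he ⊢
        rcases List.mem_cons.mp he with rfl | he
        · exact List.mem_cons.mpr (Or.inl (by simp [Sym2.map_pair_eq]))
        · exact List.mem_cons.mpr (Or.inr (hq e he))
      | inr t =>
        have ha : a = ℓ := h
        cases p' with
        | @cons _ z _ h' p'' =>
          cases z with
          | inr s => exact absurd h' (by simp)
          | inl d =>
            have hd : d = ℓ := h'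
            subst ha; subst hd
            obtain ⟨q, hq⟩ := ih p'' (by simp at hp; omega)
            exact ⟨q, fun e he => by
              rw [Walk.edges_cons, Walk.edges_cons]
              exact List.mem_cons.mpr (Or.inr (List.mem_cons.mpr (Or.inr (hq e he))))⟩

/-- Any walk ending at a pendant vertex uses the pendant edge. -/
lemma pend_edge_mem {x : A ⊕ Bool} {t : Bool} (p : (pend T ℓ).Walk x (.inr t)) :
    p.edges ≠ [] → s(.inl ℓ, .inr t) ∈ p.edges := by
  intro hne
  cases hpr : p.reverse with
  | nil =>
    exfalso
    have := congrArg Walk.reverse hpr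
    rw [Walk.reverse_reverse] at this
    subst this
    simp at hne
  | @cons _ z _ h' p'' =>
    have hz : z = Sum.inl ℓ := by
      cases z with
      | inl d => have : d = ℓ := h'; rw [this]
      | inr s => exact absurd h' (by simp)
    subst hz
    have : s(Sum.inr t, Sum.inl ℓ) ∈ p.reverse.edges := by
      rw [hpr, Walk.edges_cons]; exact List.mem_cons_self
    rw [Walk.edges_reverse, List.mem_reverse] at this
    rwa [Sym2.eq_swap] at this

lemma pend_isTree (hT : T.IsTree) : (pend T ℓ).IsTree := by
  constructor
  · exact pend_connected hT.isConnected
  · rw [isAcyclic_iff_forall_adj_isBridge]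
    rintro (a|s) (b|t) hadj
    · -- old edge
      have hab : T.Adj a b := hadj
      rw [isBridge_iff]
      rw [reachable_delete_edges_iff_exists_walk]
      rintro ⟨p, hp⟩
      obtain ⟨q, hq⟩ := pend_proj p.length p le_rfl
      have hbridge : T.IsBridge s(a, b) :=
        (isAcyclic_iff_forall_adj_isBridge.mp hT.IsAcyclic) hab
      rw [isBridge_iff] at hbridge
      apply hbridge
      rw [reachable_delete_edges_iff_exists_walk]
      refine ⟨q, fun hmem => hp ?_⟩
      have := hq _ hmem
      simpa [Sym2.map_pair_eq] using this
    · -- pendant edge, inl-inr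
      have hb : a = ℓ := hadj
      subst hb
      rw [isBridge_iff]
      rw [reachable_delete_edges_iff_exists_walk]
      rintro ⟨p, hp⟩
      apply hp
      refine pend_edge_mem p ?_
      cases p with
      | cons h q => simp
    · -- pendant edge, inr-inl
      have hb : b = ℓ := hadj
      subst hb
      rw [isBridge_iff]
      rw [reachable_delete_edges_iff_exists_walk]
      rintro ⟨p, hp⟩
      apply hp
      have hne : p.edges ≠ [] := by cases p with | cons h q => simp
      have := pend_edge_mem p.reverse (by
        rw [Walk.edges_reverse]; simpa using hne)
      rw [Walk.edges_reverse, List.mem_reverse] at this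
      rwa [Sym2.eq_swap] at this
    · exact absurd hadj (by simp)

lemma pend_neighborFinset_inr (t : Bool) :
    (pend T ℓ).neighborFinset (.inr t) = {Sum.inl ℓ} := by
  ext y
  cases y with
  | inl b => simp [mem_neighborFinset, eq_comm]
  | inr s => simp [mem_neighborFinset]

lemma pend_degree_inr (t : Bool) : (pend T ℓ).degree (.inr t) = 1 := by
  rw [degree, pend_neighborFinset_inr]; rfl

lemma pend_neighborFinset_inl_ne {a : A} (ha : a ≠ ℓ) :
    (pend T ℓ).neighborFinset (.inl a) =
      (T.neighborFinset a).map ⟨Sum.inl, Sum.inl_injective⟩ := by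
  ext y
  cases y with
  | inl b => simp [mem_neighborFinset]
  | inr s => simp [mem_neighborFinset, ha]

lemma pend_degree_inl_ne {a : A} (ha : a ≠ ℓ) :
    (pend T ℓ).degree (.inl a) = T.degree a := by
  rw [degree, pend_neighborFinset_inl_ne ha, Finset.card_map]; rfl

lemma pend_neighborFinset_inl_eq :
    (pend T ℓ).neighborFinset (.inl ℓ) =
      (T.neighborFinset ℓ).map ⟨Sum.inl, Sum.inl_injective⟩ ∪ {Sum.inr false, Sum.inr true} := by
  ext y
  cases y with
  | inl b => simp [mem_neighborFinset]
  | inr s => cases s <;> simp [mem_neighborFinset]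

lemma pend_degree_inl_eq : (pend T ℓ).degree (.inl ℓ) = T.degree ℓ + 2 := by
  rw [degree, pend_neighborFinset_inl_eq, Finset.card_union_of_disjoint, Finset.card_map]
  · rfl
  · simp

end Aux

open SimpleGraph in
/-- A cubic tree with `n` distinguished leaves. -/
structure LeafTree (n : ℕ) : Type 1 where
  VT : Type
  [fintVT : Fintype VT]
  [decVT : DecidableEq VT]
  T : SimpleGraph VT
  [decAdj : DecidableRel T.Adj]
  isTree : T.IsTree
  cubic : ∀ x : VT, T.degree x = 1 ∨ T.degree x = 3
  leaf : Fin n → VT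
  leaf_deg : ∀ i, T.degree (leaf i) = 1
  leaf_inj : Function.Injective leaf

attribute [instance] LeafTree.fintVT LeafTree.decVT LeafTree.decAdj

open SimpleGraph in
/-- The two-vertex tree. -/
def boolTree : LeafTree 2 where
  VT := Bool
  T := ⊤
  isTree := by
    constructor
    · exact connected_top
    · intro v c hc
      have h3 := hc.three_le_length
      have hnd := hc.edges_nodup
      have hall : ∀ e ∈ c.edges, e = s(false, true) := by
        intro e he
        have := Walk.edges_subset_edgeSet c he
        revert this
        refine Sym2.ind (fun a b => ?_) e
        revert a b; decide
      have hlen : c.edges.length = c.length := c.length_edges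
      have hsub : c.edges.toFinset ⊆ {s(false, true)} := by
        intro e he
        rw [List.mem_toFinset] at he
        simp [hall e he]
      have hcard := List.toFinset_card_of_nodup hnd
      have hle := Finset.card_le_card hsub
      simp only [Finset.card_singleton] at hle
      omega
  cubic := by decide
  leaf := ![false, true]
  leaf_deg := by decide
  leaf_inj := by decide

open SimpleGraph in
/-- Extend a cubic leaf tree by one more leaf. -/
def LeafTree.extend {n : ℕ} (lt : LeafTree (n + 2)) : LeafTree (n + 3) where
  VT := lt.VT ⊕ Bool
  T := pend lt.T (lt.leaf 0)
  isTree := pend_isTree lt.isTree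
  cubic := by
    rintro (a | t)
    · by_cases ha : a = lt.leaf 0
      · subst ha
        right
        rw [pend_degree_inl_eq, lt.leaf_deg 0]
      · rw [pend_degree_inl_ne ha]
        exact lt.cubic a
    · left; exact pend_degree_inr t
  leaf := fun i =>
    if (i : ℕ) = 0 then .inr false
    else if (i : ℕ) = 1 then .inr true
    else .inl (lt.leaf ⟨(i : ℕ) - 1, by omega⟩)
  leaf_deg := by
    intro i
    by_cases hi0 : (i : ℕ) = 0
    · rw [if_pos hi0]; exact pend_degree_inr _
    · by_cases hi1 : (i : ℕ) = 1
      · rw [if_neg hi0, if_pos hi1]; exact pend_degree_inr _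
      · rw [if_neg hi0, if_neg hi1]
        rw [pend_degree_inl_ne, lt.leaf_deg]
        intro h
        have := lt.leaf_inj h
        have : (i : ℕ) - 1 = 0 := congrArg Fin.val this
        omega
  leaf_inj := by
    intro i j hij
    dsimp only at hij
    by_cases hi0 : (i : ℕ) = 0
    · rw [if_pos hi0] at hij
      by_cases hj0 : (j : ℕ) = 0
      · exact Fin.ext (by omega)
      · rw [if_neg hj0] at hij
        by_cases hj1 : (j : ℕ) = 1
        · rw [if_pos hj1] at hij; exact absurd hij (by simp)
        · rw [if_neg hj1] at hij; exact absurd hij (by simp)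
    · rw [if_neg hi0] at hij
      by_cases hj0 : (j : ℕ) = 0
      · rw [if_pos hj0] at hij
        by_cases hi1 : (i : ℕ) = 1
        · rw [if_pos hi1] at hij; exact absurd hij (by simp)
        · rw [if_neg hi1] at hij; exact absurd hij (by simp)
      · rw [if_neg hj0] at hij
        by_cases hi1 : (i : ℕ) = 1
        · rw [if_pos hi1] at hij
          by_cases hj1 : (j : ℕ) = 1
          · exact Fin.ext (by omega)
          · rw [if_neg hj1] at hij; exact absurd hij (by simp)
        · rw [if_neg hi1] at hij
          by_cases hj1 : (j : ℕ) = 1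
          · rw [if_pos hj1] at hij; exact absurd hij (by simp)
          · rw [if_neg hj1] at hij
            have := congrArg Fin.val (lt.leaf_inj (Sum.inl_injective hij))
            simp only [] at this
            exact Fin.ext (by omega)

/-- Build a cubic tree with `n + 2` leaves. -/
def buildLT : (n : ℕ) → LeafTree (n + 2)
  | 0 => boolTree
  | n + 1 => (buildLT n).extend

/-- Every digraph has a carving. -/
theorem nonempty_carving (G : MDigraph) : Nonempty (Carving G) := by
  classical
  set n := Fintype.card G.V with hn
  let lt := buildLT n
  exact ⟨{ VT := lt.VT, T := lt.T, isTree := lt.isTree, cubic := lt.cubic,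
           label := fun v => lt.leaf (Fin.castLE (by omega) ((Fintype.equivFin G.V) v)),
           label_leaf := fun v => lt.leaf_deg _,
           label_inj := fun a b h => by
             have := lt.leaf_inj h
             have := Fin.castLE_injective (by omega : n ≤ n + 2) this
             exact (Fintype.equivFin G.V).injective this }⟩
open SimpleGraph

/-- Along a chain whose first element starts in `P` and whose last element ends in `Q`,
some element goes from `P` to `Q`. -/
lemma exists_crossing_elem {V α : Type*} (P Q : V → Prop) (tot : ∀ x, P x ∨ Q x)
    (tl hd : α → V) :
    ∀ (es : List α) (h : es ≠ []), es.Chain' (fun e f => hd e = tl f) →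
      P (tl (es.head h)) → Q (hd (es.getLast h)) →
      ∃ g ∈ es, P (tl g) ∧ Q (hd g) := by
  intro es
  induction es with
  | nil => simp
  | cons g es ih =>
    intro h hch hP hQ
    cases es with
    | nil => exact ⟨g, by simp, by simpa using hP, by simpa using hQ⟩
    | cons g' es' =>
      unfold List.Chain' at hch; rw [List.isChain_cons_cons] at hch
      by_cases hq : Q (hd g)
      · exact ⟨g, by simp, by simpa using hP, hq⟩
      · have hp : P (hd g) := (tot _).resolve_right hq
        have hp' : P (tl ((g' :: es').head (by simp))) := by
          simpa [← hch.1] using hp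
        obtain ⟨x, hx, h1, h2⟩ := ih (by simp) hch.2 hp'
          (by rw [← List.getLast_cons (l := g' :: es') (by simp)]; exact hQ)
        exact ⟨x, List.mem_cons.mpr (Or.inr hx), h1, h2⟩

/-- With respect to a tree edge, every vertex lies on one of the two sides. -/
lemma reach_or_of_tree {VT : Type*} {T : SimpleGraph VT} (hT : T.Connected)
    (u v : VT) (x : VT) :
    (T.deleteEdges {s(u, v)}).Reachable x u ∨ (T.deleteEdges {s(u, v)}).Reachable x v := by
  have aux : ∀ {a b : VT} (_ : T.Walk a b),
      ((T.deleteEdges {s(u, v)}).Reachable b u ∨ (T.deleteEdges {s(u, v)}).Reachable b v) →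
      ((T.deleteEdges {s(u, v)}).Reachable a u ∨ (T.deleteEdges {s(u, v)}).Reachable a v) := by
    intro a b p
    induction p with
    | nil => exact id
    | @cons a b c hadj p ih =>
      intro hyp
      by_cases he : s(a, b) = s(u, v)
      · rw [Sym2.eq_iff] at he
        rcases he with ⟨rfl, rfl⟩ | ⟨rfl, rfl⟩
        · exact Or.inl (Reachable.refl _)
        · exact Or.inr (Reachable.refl _)
      · have hadj' : (T.deleteEdges {s(u, v)}).Adj a b := by
          rw [deleteEdges_adj]
          exact ⟨hadj, by simpa using he⟩
        rcases ih hyp with h | h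
        · exact Or.inl (hadj'.reachable.trans h)
        · exact Or.inr (hadj'.reachable.trans h)
  obtain ⟨p⟩ := hT.preconnected x u
  exact aux p (Or.inl (Reachable.refl _))

/-- Pull back a carving of `G` along an immersion of `H` into `G`. -/
def Carving.pull {H G : MDigraph} (I : H.Immersion G) (c : Carving G) : Carving H where
  VT := c.VT
  fintVT := c.fintVT
  decVT := c.decVT
  T := c.T
  decAdj := c.decAdj
  isTree := c.isTree
  cubic := c.cubic
  label := fun v => c.label (I.vmap v)
  label_leaf := fun v => c.label_leaf _
  label_inj := fun a b hab => I.vinj (c.label_inj hab)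

lemma Carving.pull_cross_le {H G : MDigraph} (I : H.Immersion G) (c : Carving G)
    (u v : c.VT) : (c.pull I).cross u v ≤ c.cross u v := by
  classical
  have key : ∀ a : H.E, (c.pull I).sep u v a →
      ∃ g ∈ (I.emap a).edges, c.sep u v g := by
    intro a ha
    set D := c.T.deleteEdges {s(u, v)} with hD
    have tot : ∀ x : G.V, D.Reachable (c.label x) u ∨ D.Reachable (c.label x) v :=
      fun x => reach_or_of_tree c.isTree.isConnected u v (c.label x)
    have hfirst : (I.emap a).first = I.vmap (H.tail a) := I.first_eq a
    have hlast : (I.emap a).last = I.vmap (H.head a) := I.last_eq a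
    rcases ha with ⟨h1, h2⟩ | ⟨h1, h2⟩
    · obtain ⟨g, hg, hg1, hg2⟩ := exists_crossing_elem
        (fun x : G.V => D.Reachable (c.label x) u)
        (fun x : G.V => D.Reachable (c.label x) v) tot G.tail G.head
        (I.emap a).edges (I.emap a).nonempty (I.emap a).chain
        (by rw [show G.tail ((I.emap a).edges.head (I.emap a).nonempty) = (I.emap a).first
                  from rfl, hfirst]; exact h1)
        (by rw [show G.head ((I.emap a).edges.getLast (I.emap a).nonempty) = (I.emap a).last
                  from rfl, hlast]; exact h2)
      exact ⟨g, hg, Or.inl ⟨hg1, hg2⟩⟩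
    · obtain ⟨g, hg, hg1, hg2⟩ := exists_crossing_elem
        (fun x : G.V => D.Reachable (c.label x) v)
        (fun x : G.V => D.Reachable (c.label x) u)
        (fun x => (tot x).symm) G.tail G.head
        (I.emap a).edges (I.emap a).nonempty (I.emap a).chain
        (by rw [show G.tail ((I.emap a).edges.head (I.emap a).nonempty) = (I.emap a).first
                  from rfl, hfirst]; exact h1)
        (by rw [show G.head ((I.emap a).edges.getLast (I.emap a).nonempty) = (I.emap a).last
                  from rfl, hlast]; exact h2)
      exact ⟨g, hg, Or.inr ⟨hg1, hg2⟩⟩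
  have hex : ∀ a : {a : H.E // (c.pull I).sep u v a},
      ∃ g, g ∈ (I.emap a.1).edges ∧ c.sep u v g := by
    intro a
    obtain ⟨g, hg, hsep⟩ := key a.1 a.2
    exact ⟨g, hg, hsep⟩
  have hinj : Function.Injective
      (fun a : {a : H.E // (c.pull I).sep u v a} => (⟨(hex a).choose, (hex a).choose_spec.2⟩ :
        {g : G.E // c.sep u v g})) := by
    intro a b hab
    simp only [Subtype.mk.injEq] at hab
    by_contra hne
    have hne' : a.1 ≠ b.1 := fun h => hne (Subtype.ext h)
    exact I.edisj a.1 b.1 hne' ((hex a).choose_spec.1) (hab ▸ (hex b).choose_spec.1)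
  exact Nat.card_le_card_of_injective _ hinj

lemma Carving.cross_le_card {G : MDigraph} (c : Carving G) (u v : c.VT) :
    c.cross u v ≤ Fintype.card G.E := by
  rw [← Nat.card_eq_fintype_card]
  exact Nat.card_le_card_of_injective Subtype.val Subtype.val_injective

lemma Carving.bddAbove {G : MDigraph} (c : Carving G) :
    BddAbove {n : ℕ | ∃ u v : c.VT, c.T.Adj u v ∧ n = c.cross u v} := by
  refine ⟨Fintype.card G.E, ?_⟩
  rintro n ⟨u, v, _, rfl⟩
  exact c.cross_le_card u v

lemma Carving.pull_width_le {H G : MDigraph} (I : H.Immersion G) (c : Carving G) :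
    (c.pull I).width ≤ c.width := by
  apply csSup_le'
  rintro n ⟨u, v, hadj, rfl⟩
  calc (c.pull I).cross u v ≤ c.cross u v := c.pull_cross_le I u v
    _ ≤ c.width := le_csSup c.bddAbove ⟨u, v, hadj, rfl⟩

lemma carvingWidth_le_of_immersion {H G : MDigraph} (I : H.Immersion G) :
    carvingWidth H ≤ carvingWidth G := by
  obtain ⟨c₀⟩ := nonempty_carving G
  have hne : {n : ℕ | ∃ c : Carving G, c.width = n}.Nonempty := ⟨c₀.width, c₀, rfl⟩
  obtain ⟨c, hc⟩ := Nat.sInf_mem hne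
  calc carvingWidth H ≤ (c.pull I).width := Nat.sInf_le ⟨c.pull I, rfl⟩
    _ ≤ c.width := c.pull_width_le I
    _ = carvingWidth G := hc

/-- A subgraph inclusion induces an immersion. -/
noncomputable def immersionOfSubgraph {H G : MDigraph} (h : IsSubgraph H G) :
    H.Immersion G := by
  choose fv fe hfv hfe htail hhead using h
  exact
    { vmap := fv
      vinj := hfv
      emap := fun e => ⟨[fe e], by simp, List.isChain_singleton _, List.nodup_singleton _⟩
      first_eq := fun e => by simp [MDigraph.Trail.first, htail]
      last_eq := fun e => by simp [MDigraph.Trail.last, hhead]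
      edisj := fun e f hef => by
        simp only [List.disjoint_singleton, List.mem_singleton]
        exact fun h => hef (hfe h.symm) }

/-- Splitting off induces an immersion. -/
def immersionOfSplit (G : MDigraph) (e e' : G.E) (hne : e ≠ e')
    (hmid : G.head e = G.tail e') : (splitGraph G e e').Immersion G where
  vmap := id
  vinj := fun _ _ h => h
  emap := fun x =>
    match x with
    | .inl y => ⟨[y.1], by simp, List.isChain_singleton _, List.nodup_singleton _⟩
    | .inr _ => ⟨[e, e'], by simp, List.isChain_pair.mpr hmid, by simp [hne]⟩
  first_eq := fun x => by
    cases x with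
    | inl y => simp [MDigraph.Trail.first, splitGraph]
    | inr u => simp [MDigraph.Trail.first, splitGraph]
  last_eq := fun x => by
    cases x with
    | inl y => simp [MDigraph.Trail.last, splitGraph]
    | inr u => simp [MDigraph.Trail.last, splitGraph]
  edisj := fun x y hxy => by
    cases x with
    | inl a =>
      cases y with
      | inl b =>
        simp only [List.disjoint_singleton, List.mem_singleton]
        exact fun h => hxy (by rw [Subtype.ext h])
      | inr u =>
        intro g hg hg'
        simp only [List.mem_singleton] at hg
        subst hg
        simp only [List.mem_cons, List.mem_singleton, List.not_mem_nil, or_false] at hg'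
        rcases hg' with h | h
        · exact a.2.1 h
        · exact a.2.2 h
    | inr u =>
      cases y with
      | inl b =>
        intro g hg hg'
        simp only [List.mem_singleton] at hg'
        subst hg'
        simp only [List.mem_cons, List.mem_singleton, List.not_mem_nil, or_false] at hg
        rcases hg with h | h
        · exact b.2.1 h
        · exact b.2.2 h
      | inr u' => exact absurd rfl hxy

theorem stmt8 :
    (∀ G H : MDigraph, G.Eulerian → H.Eulerian →
        Nonempty (MDigraph.Immersion H G) → carvingWidth H ≤ carvingWidth G) ∧
      (∀ G H : MDigraph, G.Eulerian → H.Eulerian → IsSubgraph H G →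
        carvingWidth H ≤ carvingWidth G) ∧
      (∀ (G : MDigraph), G.Eulerian → ∀ (e e' : G.E), e ≠ e' → G.head e = G.tail e' →
        carvingWidth (splitGraph G e e') ≤ carvingWidth G) := by
  have main : ∀ G H : MDigraph, Nonempty (MDigraph.Immersion H G) →
      carvingWidth H ≤ carvingWidth G := by
    rintro G H ⟨I⟩
    exact carvingWidth_le_of_immersion I
  refine ⟨fun G H _ _ hI => main G H hI,
    fun G H _ _ hs => main G H ⟨immersionOfSubgraph hs⟩,
    fun G _ e e' hne hmid => main G _ ⟨immersionOfSplit G e e' hne hmid⟩⟩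
end

section
/- The class of Eulerian digraphs is not well-quasi-ordered by the strong immersion relation: there exists an infinite family (G′_k) of pairwise non-isomorphic Eulerian digraphs such that for all i ≠ j, G′_i does not strongly immerse into G′_j. -/
/-! ### Construction -/

def pmul (k : ℕ) : Option (Fin (2*k+1)) → Option (Fin (2*k+1)) → ℕ
  | some a, some b =>
      (if a.val + 1 = b.val ∧ a.val % 2 = 0 then 1 else 0) +
      (if b.val % 2 = 1 ∧ b.val + 1 = a.val then 1 else 0)
  | none, some b => if b.val = 0 ∨ b.val = 2*k then 3 else if b.val % 2 = 0 then 2 else 0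
  | some a, none => if a.val = 0 ∨ a.val = 2*k then 2 else if a.val % 2 = 0 then 0 else 2
  | none, none => 0

def Hg (k : ℕ) : MDigraph where
  V := Option (Fin (2*k+1))
  E := Σ u v : Option (Fin (2*k+1)), Fin (pmul k u v)
  tail e := e.1
  head e := e.2.1

lemma card_tail_eq (k : ℕ) (u : Option (Fin (2*k+1))) :
    Nat.card {e : (Hg k).E // (Hg k).tail e = u} = ∑ v, pmul k u v := by
  have eqv : {e : (Hg k).E // (Hg k).tail e = u} ≃ Σ v, Fin (pmul k u v) :=
    { toFun := fun x => ⟨x.1.2.1, Fin.cast (congrArg (fun w => pmul k w x.1.2.1) (show x.1.1 = u from x.2)) x.1.2.2⟩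
      invFun := fun x => ⟨⟨u, x.1, x.2⟩, rfl⟩
      left_inv := by rintro ⟨⟨u', v, c⟩, rfl⟩; rfl
      right_inv := by rintro ⟨v, c⟩; rfl }
  rw [Nat.card_congr eqv]
  simp [Nat.card_eq_fintype_card]

lemma card_head_eq (k : ℕ) (v : Option (Fin (2*k+1))) :
    Nat.card {e : (Hg k).E // (Hg k).head e = v} = ∑ u, pmul k u v := by
  have eqv : {e : (Hg k).E // (Hg k).head e = v} ≃ Σ u, Fin (pmul k u v) :=
    { toFun := fun x => ⟨x.1.1, Fin.cast (congrArg (fun w => pmul k x.1.1 w) (show x.1.2.1 = v from x.2)) x.1.2.2⟩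
      invFun := fun x => ⟨⟨x.1, v, x.2⟩, rfl⟩
      left_inv := by rintro ⟨⟨u', v', c⟩, rfl⟩; rfl
      right_inv := by rintro ⟨u', c⟩; rfl }
  rw [Nat.card_congr eqv]
  simp [Nat.card_eq_fintype_card]

lemma sum_fin_ind (n c : ℕ) (R : Prop) [Decidable R] (Q : ℕ → Prop) [DecidablePred Q]
    (hiff : ∀ x, Q x ↔ (R ∧ x = c)) :
    (∑ b : Fin n, if Q b.val then 1 else 0) = if c < n ∧ R then 1 else 0 := by
  rw [Fin.sum_univ_eq_sum_range (fun x => if Q x then 1 else 0) n]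
  have h1 : ∀ a, (if Q a then (1:ℕ) else 0) = if a = c then (if R then 1 else 0) else 0 := by
    intro a
    have := hiff a
    split_ifs <;> tauto
  simp_rw [h1]
  rw [Finset.sum_ite_eq' (Finset.range n) c (fun _ => if R then 1 else 0)]
  simp only [Finset.mem_range]
  split_ifs <;> tauto

lemma indeg_some (k : ℕ) (hk : 1 ≤ k) (b : Fin (2*k+1)) :
    Nat.card {e : (Hg k).E // (Hg k).head e = some b} =
      if b.val = 0 ∨ b.val = 2*k then 3 else 2 := by
  rw [card_head_eq, Fintype.sum_option]
  have hsplit : ∀ x : Fin (2*k+1), pmul k (some x) (some b) =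
      (if x.val + 1 = b.val ∧ x.val % 2 = 0 then 1 else 0) +
      (if b.val % 2 = 1 ∧ b.val + 1 = x.val then 1 else 0) := fun x => rfl
  rw [Finset.sum_congr rfl (fun x _ => hsplit x), Finset.sum_add_distrib]
  have e1 : (∑ x : Fin (2*k+1), if x.val + 1 = b.val ∧ x.val % 2 = 0 then 1 else 0)
      = if b.val - 1 < 2*k+1 ∧ (1 ≤ b.val ∧ b.val % 2 = 1) then 1 else 0 :=
    sum_fin_ind (2*k+1) (b.val - 1) (1 ≤ b.val ∧ b.val % 2 = 1)
      (fun x => x + 1 = b.val ∧ x % 2 = 0) (by intro x; omega)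
  have e2 : (∑ x : Fin (2*k+1), if b.val % 2 = 1 ∧ b.val + 1 = x.val then 1 else 0)
      = if b.val + 1 < 2*k+1 ∧ b.val % 2 = 1 then 1 else 0 :=
    sum_fin_ind (2*k+1) (b.val + 1) (b.val % 2 = 1)
      (fun x => b.val % 2 = 1 ∧ b.val + 1 = x) (by intro x; omega)
  rw [e1, e2]
  have hb := b.isLt
  show (if b.val = 0 ∨ b.val = 2*k then 3 else if b.val % 2 = 0 then 2 else 0) + _ = _
  split_ifs <;> omega

lemma outdeg_some (k : ℕ) (hk : 1 ≤ k) (a : Fin (2*k+1)) :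
    Nat.card {e : (Hg k).E // (Hg k).tail e = some a} =
      if a.val = 0 ∨ a.val = 2*k then 3 else 2 := by
  rw [card_tail_eq, Fintype.sum_option]
  have hsplit : ∀ x : Fin (2*k+1), pmul k (some a) (some x) =
      (if a.val + 1 = x.val ∧ a.val % 2 = 0 then 1 else 0) +
      (if x.val % 2 = 1 ∧ x.val + 1 = a.val then 1 else 0) := fun x => rfl
  rw [Finset.sum_congr rfl (fun x _ => hsplit x), Finset.sum_add_distrib]
  have e1 : (∑ x : Fin (2*k+1), if a.val + 1 = x.val ∧ a.val % 2 = 0 then 1 else 0)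
      = if a.val + 1 < 2*k+1 ∧ a.val % 2 = 0 then 1 else 0 :=
    sum_fin_ind (2*k+1) (a.val + 1) (a.val % 2 = 0)
      (fun x => a.val + 1 = x ∧ a.val % 2 = 0) (by intro x; omega)
  have e2 : (∑ x : Fin (2*k+1), if x.val % 2 = 1 ∧ x.val + 1 = a.val then 1 else 0)
      = if a.val - 1 < 2*k+1 ∧ (1 ≤ a.val ∧ a.val % 2 = 0) then 1 else 0 :=
    sum_fin_ind (2*k+1) (a.val - 1) (1 ≤ a.val ∧ a.val % 2 = 0)
      (fun x => x % 2 = 1 ∧ x + 1 = a.val) (by intro x; omega)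
  rw [e1, e2]
  have hb := a.isLt
  show (if a.val = 0 ∨ a.val = 2*k then 2 else if a.val % 2 = 0 then 0 else 2) + _ = _
  split_ifs <;> omega

lemma euler (k : ℕ) (hk : 1 ≤ k) : (Hg k).Eulerian := by
  intro v
  cases v with
  | some b => rw [indeg_some k hk b, outdeg_some k hk b]
  | none =>
    have htot : ∑ v : Option (Fin (2*k+1)), Nat.card {e : (Hg k).E // (Hg k).head e = v}
        = ∑ u : Option (Fin (2*k+1)), Nat.card {e : (Hg k).E // (Hg k).tail e = u} := by
      simp only [card_head_eq, card_tail_eq]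
      exact Finset.sum_comm
    rw [Fintype.sum_option, Fintype.sum_option] at htot
    have h2 : (∑ b : Fin (2*k+1), Nat.card {e : (Hg k).E // (Hg k).head e = some b})
        = ∑ b : Fin (2*k+1), Nat.card {e : (Hg k).E // (Hg k).tail e = some b} :=
      Finset.sum_congr rfl (fun b _ => by rw [indeg_some k hk b, outdeg_some k hk b])
    omega

/-! ### Immersion degree monotonicity -/

lemma indeg_mono {H G : MDigraph} (S : H.Immersion G) (v : H.V) :
    Nat.card {e : H.E // H.head e = v} ≤ Nat.card {e : G.E // G.head e = S.vmap v} := by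
  have hinj : Function.Injective (fun e : {e : H.E // H.head e = v} =>
      (⟨(S.emap e.1).edges.getLast (S.emap e.1).nonempty, by
        have h : (S.emap e.1).last = S.vmap v := by rw [S.last_eq, e.2]
        exact h⟩ : {e : G.E // G.head e = S.vmap v})) := by
    rintro ⟨e, he⟩ ⟨f, hf⟩ h
    simp only [Subtype.mk.injEq] at h ⊢
    by_contra hne
    refine S.edisj e f hne (List.getLast_mem (S.emap e).nonempty) ?_
    rw [show (S.emap e).edges.getLast (S.emap e).nonempty = (S.emap f).edges.getLast (S.emap f).nonempty from congrArg Subtype.val h]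
    exact List.getLast_mem (S.emap f).nonempty
  exact Nat.card_le_card_of_injective _ hinj

/-! ### Lower bounds on in-degrees in `Hg` -/

lemma indeg_w_ge (k : ℕ) (hk : 1 ≤ k) :
    4 ≤ Nat.card {e : (Hg k).E // (Hg k).head e = none} := by
  rw [card_head_eq, Fintype.sum_option]
  have hne : (⟨0, by omega⟩ : Fin (2*k+1)) ≠ ⟨2*k, by omega⟩ := by
    intro h
    have := congrArg Fin.val h
    simp at this
    omega
  have hsub : ({⟨0, by omega⟩, ⟨2*k, by omega⟩} : Finset (Fin (2*k+1))) ⊆ Finset.univ :=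
    Finset.subset_univ _
  have hle := Finset.sum_le_sum_of_subset (f := fun a : Fin (2*k+1) => pmul k (some a) none) hsub
  rw [Finset.sum_pair hne] at hle
  have h0 : pmul k (some (⟨0, by omega⟩ : Fin (2*k+1))) none = 2 := by simp [pmul]
  have h2 : pmul k (some (⟨2*k, by omega⟩ : Fin (2*k+1))) none = 2 := by simp [pmul]
  rw [h0, h2] at hle
  omega

lemma indeg_end_ge (k : ℕ) (hk : 1 ≤ k) (b : Fin (2*k+1)) (hb : b.val = 0 ∨ b.val = 2*k) :
    3 ≤ Nat.card {e : (Hg k).E // (Hg k).head e = some b} := by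
  rw [card_head_eq, Fintype.sum_option]
  have h0 : pmul k none (some b) = 3 := by
    show (if b.val = 0 ∨ b.val = 2*k then 3 else if b.val % 2 = 0 then 2 else 0) = 3
    rw [if_pos hb]
  rw [h0]
  omega

/-! ### Trails in `Hg` avoiding the hub internally are single path edges -/

lemma path_edge_parity (k : ℕ) (a b : Fin (2*k+1)) (hp : 0 < pmul k (some a) (some b)) :
    a.val % 2 = 0 ∧ b.val % 2 = 1 ∧ (b.val = a.val + 1 ∨ a.val = b.val + 1) := by
  have : (if a.val + 1 = b.val ∧ a.val % 2 = 0 then 1 else 0) +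
      (if b.val % 2 = 1 ∧ b.val + 1 = a.val then 1 else 0) > 0 := hp
  split_ifs at this <;> omega

lemma head_of_cons {α : Type*} {l : List α} {a : α} {s : List α} (h : l = a :: s)
    (hne : l ≠ []) : l.head hne = a := by subst h; rfl

lemma getLast_of_one {α : Type*} {l : List α} {a : α} (h : l = [a])
    (hne : l ≠ []) : l.getLast hne = a := by subst h; rfl

lemma getLast_of_two {α : Type*} {l : List α} {a b : α} (h : l = [a, b])
    (hne : l ≠ []) : l.getLast hne = b := by subst h; rfl

lemma trail_single (j : ℕ) (t : (Hg j).Trail) (h1 : t.first ≠ none)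
    (h2 : t.last ≠ none) (h3 : none ∉ t.internals) : ∃ e, t.edges = [e] := by
  rcases hL : t.edges with _ | ⟨e, _ | ⟨f, r⟩⟩
  · exact absurd hL t.nonempty
  · exact ⟨e, rfl⟩
  · exfalso
    have hch := t.chain
    rw [hL] at hch
    have hcons : (Hg j).head e = (Hg j).tail f := (List.isChain_cons_cons.mp hch).1
    have hfirst : t.first = (Hg j).tail e := by
      unfold MDigraph.Trail.first
      rw [head_of_cons hL]
    have hint : t.internals = ((e :: f :: r).dropLast).map (Hg j).head := by
      unfold MDigraph.Trail.internals; rw [hL]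
    have hhe : (Hg j).head e ∈ t.internals := by
      rw [hint]
      cases r <;> simp
    have hhf : (Hg j).head f ≠ none := by
      rcases r with _ | ⟨x, r'⟩
      · have hlast : t.last = (Hg j).head f := by
          unfold MDigraph.Trail.last
          rw [getLast_of_two hL]
        rw [← hlast]; exact h2
      · intro hnone
        refine h3 ?_
        rw [hint, ← hnone]
        exact List.mem_cons_of_mem _ (List.mem_cons_self ..)
    have hte : (Hg j).tail e ≠ none := hfirst ▸ h1
    have hhe' : (Hg j).head e ≠ none := fun hn => h3 (hn ▸ hhe)
    obtain ⟨u, v, c⟩ := e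
    obtain ⟨u2, v2, c2⟩ := f
    have huv : v = u2 := hcons
    subst huv
    obtain ⟨a, rfl⟩ := Option.ne_none_iff_exists'.mp hte
    obtain ⟨b, rfl⟩ := Option.ne_none_iff_exists'.mp hhe'
    obtain ⟨b2, rfl⟩ := Option.ne_none_iff_exists'.mp hhf
    have p1 := path_edge_parity j a b c.pos
    have p2 := path_edge_parity j b b2 c2.pos
    omega

/-! ### The path edges -/

lemma pmul_path_pos_even (k m : ℕ) (h : m < 2*k) (hm : m % 2 = 0) :
    0 < pmul k (some ⟨m, by omega⟩) (some ⟨m+1, by omega⟩) := by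
  show 0 < (if m + 1 = m + 1 ∧ m % 2 = 0 then 1 else 0) +
      (if (m+1) % 2 = 1 ∧ (m+1) + 1 = m then 1 else 0)
  split_ifs <;> omega

lemma pmul_path_pos_odd (k m : ℕ) (h : m < 2*k) (hm : m % 2 = 1) :
    0 < pmul k (some ⟨m+1, by omega⟩) (some ⟨m, by omega⟩) := by
  show 0 < (if (m+1) + 1 = m ∧ (m+1) % 2 = 0 then 1 else 0) +
      (if m % 2 = 1 ∧ m + 1 = m + 1 then 1 else 0)
  split_ifs <;> omega

def pathE (i m : ℕ) (h : m < 2*i) : (Hg i).E :=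
  if hm : m % 2 = 0 then
    ⟨some ⟨m, by omega⟩, some ⟨m+1, by omega⟩, ⟨0, pmul_path_pos_even i m h hm⟩⟩
  else
    ⟨some ⟨m+1, by omega⟩, some ⟨m, by omega⟩, ⟨0, pmul_path_pos_odd i m h (by omega)⟩⟩

lemma tail_pathE_even (i m : ℕ) (h : m < 2*i) (hm : m % 2 = 0) :
    (Hg i).tail (pathE i m h) = some ⟨m, by omega⟩ := by
  simp [pathE, hm, Hg]

lemma head_pathE_even (i m : ℕ) (h : m < 2*i) (hm : m % 2 = 0) :
    (Hg i).head (pathE i m h) = some ⟨m+1, by omega⟩ := by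
  simp [pathE, hm, Hg]

lemma tail_pathE_odd (i m : ℕ) (h : m < 2*i) (hm : m % 2 = 1) :
    (Hg i).tail (pathE i m h) = some ⟨m+1, by omega⟩ := by
  have hm' : ¬ m % 2 = 0 := by omega
  simp [pathE, hm', Hg]

lemma head_pathE_odd (i m : ℕ) (h : m < 2*i) (hm : m % 2 = 1) :
    (Hg i).head (pathE i m h) = some ⟨m, by omega⟩ := by
  have hm' : ¬ m % 2 = 0 := by omega
  simp [pathE, hm', Hg]

/-! ### The main non-immersion lemma -/

lemma no_strimm (i j : ℕ) (hi : 1 ≤ i) (hj : 1 ≤ j) (hij : i ≠ j) :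
    IsEmpty ((Hg i).StrongImmersion (Hg j)) := by
  constructor
  intro S
  -- the hub maps to the hub
  have hw : S.vmap none = none := by
    cases hv : S.vmap none with
    | none => rfl
    | some b =>
      have h1 := indeg_mono S.toImmersion none
      rw [hv] at h1
      have h2 := indeg_w_ge i hi
      rw [indeg_some j hj b] at h1
      split_ifs at h1 <;> omega
  have hsm : ∀ x : Fin (2*i+1), S.vmap (some x) ≠ none := by
    intro x hx
    have := S.vinj (hx.trans hw.symm)
    simp at this
  have hsome' : ∀ x : Fin (2*i+1), ∃ y : Fin (2*j+1), S.vmap (some x) = some y := by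
    intro x
    cases hv : S.vmap (some x) with
    | none => exact absurd hv (hsm x)
    | some y => exact ⟨y, rfl⟩
  choose F hF using hsome'
  -- each path edge maps to a single edge
  have hsingle : ∀ m (h : m < 2*i), ∃ e : (Hg j).E,
      (S.emap (pathE i m h)).edges = [e] ∧
      e.1 = S.vmap ((Hg i).tail (pathE i m h)) ∧
      e.2.1 = S.vmap ((Hg i).head (pathE i m h)) := by
    intro m h
    have hfne : (S.emap (pathE i m h)).first ≠ none := by
      rw [S.first_eq]
      by_cases hm : m % 2 = 0
      · rw [tail_pathE_even i m h hm]; exact hsm _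
      · rw [tail_pathE_odd i m h (by omega)]; exact hsm _
    have hlne : (S.emap (pathE i m h)).last ≠ none := by
      rw [S.last_eq]
      by_cases hm : m % 2 = 0
      · rw [head_pathE_even i m h hm]; exact hsm _
      · rw [head_pathE_odd i m h (by omega)]; exact hsm _
    have hine : none ∉ (S.emap (pathE i m h)).internals := by
      rw [← hw]; exact S.strong _ none
    obtain ⟨e, he⟩ := trail_single j (S.emap (pathE i m h)) hfne hlne hine
    refine ⟨e, he, ?_, ?_⟩
    · have := S.first_eq (pathE i m h)
      unfold MDigraph.Trail.first at this
      rw [head_of_cons he] at this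
      exact this
    · have := S.last_eq (pathE i m h)
      unfold MDigraph.Trail.last at this
      rw [getLast_of_one he] at this
      exact this
  -- the vertex index map along the path
  set g : ℕ → ℕ := fun m => if h : m < 2*i+1 then (F ⟨m, h⟩).val else 0 with hgdef
  have hgv : ∀ (m : ℕ) (h : m < 2*i+1), g m = (F ⟨m, h⟩).val := by
    intro m h
    simp only [hgdef, dif_pos h]
  have hgb : ∀ (m : ℕ) (h : m < 2*i+1), g m < 2*j+1 := by
    intro m h
    rw [hgv m h]
    exact (F ⟨m, h⟩).isLt
  have gF : ∀ (m : ℕ) (h : m < 2*i+1),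
      S.vmap (some ⟨m, h⟩) = some ⟨g m, hgb m h⟩ := by
    intro m h
    rw [hF]
    congr 1
    exact Fin.ext (hgv m h).symm
  -- adjacency
  have hadj : ∀ m, m < 2*i → (g (m+1) = g m + 1 ∨ g m = g (m+1) + 1) := by
    intro m h
    obtain ⟨⟨u, v, c⟩, hed, ht, hh⟩ := hsingle m h
    have hp : 0 < pmul j u v := c.pos
    by_cases hm : m % 2 = 0
    · rw [tail_pathE_even i m h hm, gF m (by omega)] at ht
      rw [head_pathE_even i m h hm, gF (m+1) (by omega)] at hh
      dsimp only at ht hh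
      rw [ht, hh] at hp
      have hpar := path_edge_parity j _ _ hp
      dsimp only at hpar
      omega
    · rw [tail_pathE_odd i m h (by omega), gF (m+1) (by omega)] at ht
      rw [head_pathE_odd i m h (by omega), gF m (by omega)] at hh
      dsimp only at ht hh
      rw [ht, hh] at hp
      have hpar := path_edge_parity j _ _ hp
      dsimp only at hpar
      omega
  -- no turning back (injectivity of vmap)
  have hturn : ∀ m, m + 2 ≤ 2*i → g (m+2) ≠ g m := by
    intro m h heq
    have hvv : S.vmap (some ⟨m+2, by omega⟩) = S.vmap (some ⟨m, by omega⟩) := by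
      rw [gF (m+2) (by omega), gF m (by omega)]
      congr 1
      exact Fin.ext heq
    have h3 := S.vinj hvv
    have h4 : m + 2 = m := by
      have := congrArg (fun o : Option (Fin (2*i+1)) => o.elim 0 Fin.val) h3
      simpa using this
    omega
  -- the endpoints of the path map to endpoints
  have hend : ∀ (m : ℕ) (h : m < 2*i+1), (m = 0 ∨ m = 2*i) → (g m = 0 ∨ g m = 2*j) := by
    intro m h hm
    have h1 := indeg_mono S.toImmersion (some ⟨m, h⟩)
    rw [hF] at h1
    have h2 := indeg_end_ge i hi ⟨m, h⟩ hm
    rw [indeg_some j hj (F ⟨m, h⟩)] at h1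
    have h4 := hgv m h
    split_ifs at h1 with hc
    · omega
    · omega
  have h0 := hend 0 (by omega) (Or.inl rfl)
  have hN := hend (2*i) (by omega) (Or.inr rfl)
  rcases h0 with h0 | h0
  · -- forward case : g m = m
    have h1 : g 1 = 1 := by
      rcases (show g 1 = g 0 + 1 ∨ g 0 = g 1 + 1 from hadj 0 (by omega)) with h | h <;> omega
    have pairs : ∀ m, m + 1 ≤ 2*i → g m = m ∧ g (m+1) = m+1 := by
      intro m
      induction m with
      | zero => exact fun _ => ⟨h0, h1⟩
      | succ n ih =>
        intro hn
        obtain ⟨hgn, hgn1⟩ := ih (by omega)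
        show g (n+1) = n+1 ∧ g (n+2) = n+2
        rcases (show g (n+2) = g (n+1) + 1 ∨ g (n+1) = g (n+2) + 1 from
            hadj (n+1) (by omega)) with h | h
        · exact ⟨hgn1, by omega⟩
        · exact absurd (by omega : g (n+2) = g n) (hturn n (by omega))
    have hfin : g (2*i) = 2*i := by
      obtain ⟨_, h⟩ := pairs (2*i - 1) (by omega)
      have h2 : 2*i - 1 + 1 = 2*i := by omega
      rwa [h2] at h
    omega
  · -- backward case : g m + m = 2*j
    have h1 : g 1 + 1 = 2*j := by
      have hb := hgb 1 (by omega)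
      rcases (show g 1 = g 0 + 1 ∨ g 0 = g 1 + 1 from hadj 0 (by omega)) with h | h <;> omega
    have pairs : ∀ m, m + 1 ≤ 2*i → g m + m = 2*j ∧ g (m+1) + (m+1) = 2*j := by
      intro m
      induction m with
      | zero => exact fun _ => ⟨by omega, h1⟩
      | succ n ih =>
        intro hn
        obtain ⟨hgn, hgn1⟩ := ih (by omega)
        show g (n+1) + (n+1) = 2*j ∧ g (n+2) + (n+2) = 2*j
        rcases (show g (n+2) = g (n+1) + 1 ∨ g (n+1) = g (n+2) + 1 from
            hadj (n+1) (by omega)) with h | h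
        · exact absurd (by omega : g (n+2) = g n) (hturn n (by omega))
        · exact ⟨hgn1, by omega⟩
    have hfin : g (2*i) + 2*i = 2*j := by
      obtain ⟨_, h⟩ := pairs (2*i - 1) (by omega)
      have h2 : 2*i - 1 + 1 = 2*i := by omega
      rwa [h2] at h
    omega

theorem stmt10 :
    ∃ Gf : ℕ → MDigraph,
      (∀ k, (Gf k).Eulerian) ∧
        (∀ i j, i ≠ j → IsEmpty (MDigraph.Iso (Gf i) (Gf j))) ∧
        (∀ i j, i ≠ j → IsEmpty (MDigraph.StrongImmersion (Gf i) (Gf j))) := by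
  refine ⟨fun k => Hg (k+1), fun k => euler (k+1) (by omega), ?_, ?_⟩
  · intro i j hij
    constructor
    intro φ
    have hc := Fintype.card_congr φ.vequiv
    have h1 : Fintype.card (Hg (i+1)).V = 2*(i+1)+2 := by
      show Fintype.card (Option (Fin (2*(i+1)+1))) = _
      simp
    have h2 : Fintype.card (Hg (j+1)).V = 2*(j+1)+2 := by
      show Fintype.card (Option (Fin (2*(j+1)+1))) = _
      simp
    rw [h1, h2] at hc
    omega
  · intro i j hij
    exact no_strimm (i+1) (j+1) (by omega) (by omega) (by omega)
end

section
/- Every Eulerian digraph G of maximum degree 4 on n vertices strongly immerses into the router R_{6n}. -/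
/-- A directed circle: a closed trail without repeated vertices. -/
def MDigraph.Trail.IsCircle {G : MDigraph} (t : G.Trail) : Prop :=
  t.last = t.first ∧ (t.edges.map G.tail).Nodup

/-- `R` is a `k`-router: an Eulerian digraph on vertex set `{v_{i,j} : i < j}`
covered by `k` pairwise edge-disjoint directed circles such that circles `i` and `j`
intersect exactly in the vertex `v_{i,j}`. -/
def IsRouter (R : MDigraph) (k : ℕ) : Prop :=
  R.Eulerian ∧
    ∃ (φ : R.V ≃ {p : Fin k × Fin k // p.1 < p.2}) (C : Fin k → R.Trail),
      (∀ i, (C i).IsCircle) ∧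
        (∀ i j, i ≠ j → (C i).edges.Disjoint (C j).edges) ∧
        (∀ e : R.E, ∃ i, e ∈ (C i).edges) ∧
        (∀ (i j : Fin k), i < j → ∀ v : R.V,
          ((v ∈ (C i).edges.map R.tail) ∧ (v ∈ (C j).edges.map R.tail)) ↔
            (φ v).val = (i, j))

namespace R12
open List

variable {R : MDigraph}

lemma tlen_pos (t : R.Trail) : 0 < t.edges.length := List.length_pos_iff.mpr t.nonempty

/-- tails list of a trail -/
def tl (t : R.Trail) : List R.V := t.edges.map R.tail

lemma length_tl (t : R.Trail) : (tl t).length = t.edges.length := by simp [tl]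

lemma tl_getElem (t : R.Trail) {j : ℕ} (hj : j < t.edges.length) :
    (tl t)[j]'(by simpa [tl] using hj) = R.tail (t.edges[j]) := by
  simp [tl]

/-- index of a vertex on a trail -/
def idx (t : R.Trail) (x : R.V) : ℕ := (tl t).idxOf x

lemma idx_lt (t : R.Trail) {x : R.V} (hx : x ∈ tl t) :
    idx t x < t.edges.length := by
  have := List.idxOf_lt_length_iff.mpr hx
  simpa [idx, tl] using this

lemma tail_getElem_idx (t : R.Trail) {x : R.V} (hx : x ∈ tl t) :
    R.tail (t.edges[idx t x]'(idx_lt t hx)) = x := by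
  have h2 : idx t x < (tl t).length := by simpa [length_tl] using idx_lt t hx
  have h3 := List.getElem_idxOf (x := x) (xs := tl t) h2
  rw [← tl_getElem t (idx_lt t hx)]
  exact h3

lemma idx_inj (t : R.Trail) {x y : R.V} (hx : x ∈ tl t) (hy : y ∈ tl t)
    (h : idx t x = idx t y) : x = y := by
  exact (List.idxOf_inj (y := y) hx).mp h

lemma idx_ne (t : R.Trail) {x y : R.V} (hx : x ∈ tl t) (hy : y ∈ tl t)
    (hxy : x ≠ y) : idx t x ≠ idx t y := fun h => hxy (idx_inj t hx hy h)

/-- for a circle: head of edge j is tail of edge (j+1) mod length -/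
lemma head_circ (t : R.Trail) (hc : t.IsCircle) {j : ℕ} (hj : j < t.edges.length) :
    R.head (t.edges[j]) = R.tail (t.edges[(j+1) % t.edges.length]'
      (Nat.mod_lt _ (tlen_pos t))) := by
  rcases Nat.lt_or_ge (j+1) t.edges.length with h | h
  · have h2 := List.isChain_iff_getElem.mp t.chain j (by omega)
    have : (j+1) % t.edges.length = j+1 := Nat.mod_eq_of_lt h
    simp_rw [this]
    exact h2
  · have hj1 : j = t.edges.length - 1 := by omega
    have hmod : (j+1) % t.edges.length = 0 := by
      have : j + 1 = t.edges.length := by omega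
      simp [this]
    have h1 := hc.1
    unfold MDigraph.Trail.last MDigraph.Trail.first at h1
    rw [List.getLast_eq_getElem, List.head_eq_getElem] at h1
    simp_rw [hmod, ← hj1] at h1 ⊢
    exact h1

/-- cyclic distance from x to y on trail t -/
def rdist (t : R.Trail) (x y : R.V) : ℕ :=
  if idx t x ≤ idx t y then idx t y - idx t x else t.edges.length + idx t y - idx t x

lemma rdist_pos (t : R.Trail) {x y : R.V} (hx : x ∈ tl t) (h : idx t x ≠ idx t y) :
    0 < rdist t x y := by
  have := idx_lt t hx
  unfold rdist; split <;> omega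

lemma rdist_lt (t : R.Trail) {x y : R.V} (hy : y ∈ tl t) (h : idx t x ≠ idx t y) :
    rdist t x y < t.edges.length := by
  have := idx_lt t hy
  unfold rdist; split <;> omega

lemma idx_add_rdist (t : R.Trail) {x y : R.V} (hx : x ∈ tl t) (hy : y ∈ tl t) :
    (idx t x + rdist t x y) % t.edges.length = idx t y := by
  have h1 := idx_lt t hx
  have h2 := idx_lt t hy
  unfold rdist; split
  case isTrue h =>
    have : idx t x + (idx t y - idx t x) = idx t y := by omega
    rw [this, Nat.mod_eq_of_lt h2]
  case isFalse h =>
    have : idx t x + (t.edges.length + idx t y - idx t x) = t.edges.length + idx t y := by omega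
    rw [this, Nat.add_mod_left, Nat.mod_eq_of_lt h2]

lemma rdist_add_rdist (t : R.Trail) {x y : R.V} (hx : x ∈ tl t) (hy : y ∈ tl t)
    (h : idx t x ≠ idx t y) : rdist t x y + rdist t y x = t.edges.length := by
  have h1 := idx_lt t hx
  have h2 := idx_lt t hy
  unfold rdist; split <;> split <;> omega

lemma rdist_inj (t : R.Trail) {p x y : R.V} (hp : p ∈ tl t) (hx : x ∈ tl t) (hy : y ∈ tl t)
    (h : rdist t p x = rdist t p y) : x = y := by
  have h0 := idx_lt t hp
  have h1 := idx_lt t hx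
  have h2 := idx_lt t hy
  apply idx_inj t hx hy
  unfold rdist at h
  split at h <;> split at h <;> omega
/-- the arc of circle `t` from `x` to `y` -/
lemma mod_cancel {L a b c : ℕ} (ha : a < L) (hb : b < L)
    (h : (a + c) % L = (b + c) % L) : a = b := by
  have h2 : a ≡ b [MOD L] := Nat.ModEq.add_right_cancel' c h
  unfold Nat.ModEq at h2
  rwa [Nat.mod_eq_of_lt ha, Nat.mod_eq_of_lt hb] at h2

lemma gE {α : Type*} (l : List α) {i j : ℕ} (h : i = j) {hi : i < l.length} :
    l[i]'hi = l[j]'(h ▸ hi) := by subst h; rfl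

/-- the arc of circle `t` from `x` to `y` -/
def arcEdges (t : R.Trail) (x y : R.V) : List R.E :=
  (t.edges.rotate (idx t x)).take (rdist t x y)

section Arc

variable (t : R.Trail) {x y : R.V}

lemma arc_length (hx : x ∈ tl t) (hy : y ∈ tl t) (hxy : x ≠ y) :
    (arcEdges t x y).length = rdist t x y := by
  have := rdist_lt t hy (idx_ne t hx hy hxy)
  simp [arcEdges, List.length_take]
  omega

lemma arc_getElem {i : ℕ} (hi : i < (arcEdges t x y).length) :
    (arcEdges t x y)[i] = t.edges[(i + idx t x) % t.edges.length]'
      (Nat.mod_lt _ (tlen_pos t)) := by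
  unfold arcEdges at hi ⊢
  rw [List.getElem_take, List.getElem_rotate]

lemma arc_ne_nil (hx : x ∈ tl t) (hy : y ∈ tl t) (hxy : x ≠ y) :
    arcEdges t x y ≠ [] := by
  have h := rdist_pos t hx (idx_ne t hx hy hxy)
  have h2 := arc_length t hx hy hxy
  intro hcon
  rw [hcon] at h2
  simp at h2
  omega

lemma arc_nodup : (arcEdges t x y).Nodup :=
  (List.take_sublist _ _).nodup (List.nodup_rotate.mpr t.nodup)

lemma arc_chain (hc : t.IsCircle) :
    (arcEdges t x y).Chain' (fun e f => R.head e = R.tail f) := by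
  unfold List.Chain'
  rw [List.isChain_iff_getElem]
  intro i hi
  rw [arc_getElem t (by omega), arc_getElem t (by omega)]
  rw [head_circ t hc]
  exact congrArg R.tail (gE t.edges (by rw [Nat.mod_add_mod]; congr 1; omega))

lemma arc_subset {a : R.E} (ha : a ∈ arcEdges t x y) : a ∈ t.edges := by
  rw [List.mem_iff_getElem] at ha
  obtain ⟨i, hi, rfl⟩ := ha
  rw [arc_getElem t hi]
  exact List.getElem_mem _

/-- the arc as a trail -/
def arcT (hc : t.IsCircle) (hx : x ∈ tl t) (hy : y ∈ tl t) (hxy : x ≠ y) : R.Trail where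
  edges := arcEdges t x y
  nonempty := arc_ne_nil t hx hy hxy
  chain := arc_chain t hc
  nodup := arc_nodup t

variable (hc : t.IsCircle) (hx : x ∈ tl t) (hy : y ∈ tl t) (hxy : x ≠ y)

lemma arcT_first : (arcT t hc hx hy hxy).first = x := by
  unfold MDigraph.Trail.first arcT
  simp only
  rw [List.head_eq_getElem, arc_getElem t]
  have h1 := idx_lt t hx
  have : (0 + idx t x) % t.edges.length = idx t x := by
    rw [Nat.zero_add, Nat.mod_eq_of_lt h1]
  simp_rw [this]
  exact tail_getElem_idx t hx

lemma arcT_last : (arcT t hc hx hy hxy).last = y := by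
  unfold MDigraph.Trail.last arcT
  simp only
  rw [List.getLast_eq_getElem, arc_getElem t]
  have hd := rdist_pos t hx (idx_ne t hx hy hxy)
  have hlen := arc_length t hx hy hxy
  rw [head_circ t hc]
  have key : (((arcEdges t x y).length - 1 + idx t x) % t.edges.length + 1) % t.edges.length
      = idx t y := by
    rw [Nat.mod_add_mod, ← idx_add_rdist t hx hy]
    congr 1
    omega
  rw [gE _ key]
  exact tail_getElem_idx t hy

/-- every internal vertex of an arc has the canonical form -/
lemma arc_internal {v : R.V} (hv : v ∈ (arcT t hc hx hy hxy).internals) :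
    ∃ i, 0 < i ∧ i < rdist t x y ∧
      v = R.tail (t.edges[(i + idx t x) % t.edges.length]'(Nat.mod_lt _ (tlen_pos t))) := by
  unfold MDigraph.Trail.internals arcT at hv
  simp only [List.mem_map] at hv
  obtain ⟨a, ha, rfl⟩ := hv
  rw [List.mem_iff_getElem] at ha
  obtain ⟨j, hj, rfl⟩ := ha
  have hlen := arc_length t hx hy hxy
  have hj2 : j < (arcEdges t x y).length - 1 := by
    simpa [List.length_dropLast] using hj
  rw [List.getElem_dropLast, arc_getElem t (by omega), head_circ t hc]
  refine ⟨j+1, by omega, by omega, ?_⟩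
  congr 1
  apply gE
  rw [Nat.mod_add_mod]
  congr 1
  omega

/-- internal vertices of an arc lie on the circle -/
lemma arc_internal_mem_tl {v : R.V} (hv : v ∈ (arcT t hc hx hy hxy).internals) :
    v ∈ tl t := by
  obtain ⟨i, _, _, rfl⟩ := arc_internal t hc hx hy hxy hv
  rw [← tl_getElem t]
  exact List.getElem_mem _

/-- the start point of an arc is not internal -/
lemma arc_first_not_internal : x ∉ (arcT t hc hx hy hxy).internals := by
  intro hv
  obtain ⟨i, hi0, hid, hform⟩ := arc_internal t hc hx hy hxy hv
  have hL := rdist_lt t hy (idx_ne t hx hy hxy)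
  have h1 := idx_lt t hx
  have hform2 : (tl t)[(i + idx t x) % t.edges.length]'(by
      rw [length_tl]; exact Nat.mod_lt _ (tlen_pos t)) = (tl t)[idx t x]'(by
      rw [length_tl]; exact h1) := by
    rw [tl_getElem, tl_getElem]
    rw [← hform]
    exact (tail_getElem_idx t hx).symm
    exact Nat.mod_lt _ (tlen_pos t)
  have h6 := (hc.2.getElem_inj_iff).mp hform2
  have h7 : (i + idx t x) % t.edges.length = (0 + idx t x) % t.edges.length := by
    rw [Nat.zero_add, Nat.mod_eq_of_lt h1]; exact h6
  have := mod_cancel (by omega) (tlen_pos t) h7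
  omega

/-- the end point of an arc is not internal -/
lemma arc_last_not_internal : y ∉ (arcT t hc hx hy hxy).internals := by
  intro hv
  obtain ⟨i, hi0, hid, hform⟩ := arc_internal t hc hx hy hxy hv
  have hL := rdist_lt t hy (idx_ne t hx hy hxy)
  have h1 := idx_lt t hy
  have hform2 : (tl t)[(i + idx t x) % t.edges.length]'(by
      rw [length_tl]; exact Nat.mod_lt _ (tlen_pos t)) = (tl t)[idx t y]'(by
      rw [length_tl]; exact h1) := by
    rw [tl_getElem, tl_getElem]
    rw [← hform]
    exact (tail_getElem_idx t hy).symm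
    exact Nat.mod_lt _ (tlen_pos t)
  have h3 := (hc.2.getElem_inj_iff).mp hform2
  rw [← idx_add_rdist t hx hy] at h3
  have hLr := rdist_lt t hy (idx_ne t hx hy hxy)
  have h4 : (i + idx t x) % t.edges.length = (rdist t x y + idx t x) % t.edges.length := by
    rw [h3]; congr 1; omega
  have := mod_cancel (by omega) (by omega) h4
  omega

end Arc
section Disj

variable (t : R.Trail)

/-- arcs on the same circle with disjoint cyclic index ranges are disjoint -/
lemma arc_disjoint_of_idx {x1 y1 x2 y2 : R.V}
    (h : ∀ i < (arcEdges t x1 y1).length, ∀ j < (arcEdges t x2 y2).length,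
      (i + idx t x1) % t.edges.length ≠ (j + idx t x2) % t.edges.length) :
    (arcEdges t x1 y1).Disjoint (arcEdges t x2 y2) := by
  intro a ha1 ha2
  rw [List.mem_iff_getElem] at ha1 ha2
  obtain ⟨i, hi, rfl⟩ := ha1
  obtain ⟨j, hj, hj2⟩ := ha2
  rw [arc_getElem t hi, arc_getElem t hj] at hj2
  exact h i hi j hj ((t.nodup.getElem_inj_iff).mp hj2.symm)

/-- the key disjointness: an arc leaving `p` and an arc entering `p`,
with the leaving arc shorter than the other's start offset -/
lemma arc_disjoint_base {p y1 x2 : R.V}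
    (hp : p ∈ tl t) (hy1 : y1 ∈ tl t) (hx2 : x2 ∈ tl t)
    (hpy : p ≠ y1) (hxp : x2 ≠ p)
    (hle : rdist t p y1 ≤ rdist t p x2) :
    (arcEdges t p y1).Disjoint (arcEdges t x2 p) := by
  apply arc_disjoint_of_idx
  intro i hi j hj heq
  rw [arc_length t hp hy1 hpy] at hi
  rw [arc_length t hx2 hp hxp] at hj
  set L := t.edges.length with hL
  have hr2 : (idx t p + rdist t p x2) % L = idx t x2 := idx_add_rdist t hp hx2
  have hsum : rdist t p x2 + rdist t x2 p = L :=
    rdist_add_rdist t hp hx2 (idx_ne t hp hx2 (Ne.symm hxp))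
  have hr2lt : rdist t p x2 < L := rdist_lt t hx2 (idx_ne t hp hx2 (Ne.symm hxp))
  -- rewrite rhs index
  have heq2 : (i + idx t p) % L = (j + rdist t p x2 + idx t p) % L := by
    rw [heq, ← hr2, Nat.add_mod_mod]
    congr 1
    omega
  have := mod_cancel (a := i) (b := j + rdist t p x2) (by omega) (by omega) heq2
  omega

/-- arcs on edge-disjoint circles are disjoint -/
lemma arc_disjoint_of_circles {t1 t2 : R.Trail} (h : t1.edges.Disjoint t2.edges)
    {x1 y1 x2 y2 : R.V} : (arcEdges t1 x1 y1).Disjoint (arcEdges t2 x2 y2) := by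
  intro a ha1 ha2
  exact h (arc_subset t1 ha1) (arc_subset t2 ha2)

end Disj

section Comp

/-- composition of trails -/
def comp (t1 t2 : R.Trail) (h : t1.last = t2.first) (hd : t1.edges.Disjoint t2.edges) :
    R.Trail where
  edges := t1.edges ++ t2.edges
  nonempty := by simp [t1.nonempty]
  chain := by
    unfold List.Chain'
    rw [List.isChain_append]
    refine ⟨t1.chain, t2.chain, ?_⟩
    intro a ha b hb
    rw [List.getLast?_eq_getLast t1.nonempty] at ha
    rw [List.head?_eq_head t2.nonempty] at hb
    simp only [Option.mem_some_iff] at ha hb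
    subst ha; subst hb
    exact h
  nodup := t1.nodup.append t2.nodup hd

variable (t1 t2 : R.Trail) (h : t1.last = t2.first) (hd : t1.edges.Disjoint t2.edges)

lemma comp_edges : (comp t1 t2 h hd).edges = t1.edges ++ t2.edges := rfl

lemma comp_first : (comp t1 t2 h hd).first = t1.first := by
  unfold MDigraph.Trail.first comp
  simp only
  congr 1
  rw [List.head_append]
  simp [t1.nonempty]

lemma comp_last : (comp t1 t2 h hd).last = t2.last := by
  unfold MDigraph.Trail.last comp
  simp only
  congr 1
  rw [List.getLast_append]
  simp [t2.nonempty]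

lemma heads_eq_internals_last (t : R.Trail) :
    t.edges.map R.head = t.internals ++ [t.last] := by
  unfold MDigraph.Trail.internals MDigraph.Trail.last
  conv_lhs => rw [← List.dropLast_append_getLast t.nonempty]
  rw [List.map_append]
  simp

lemma comp_internals :
    (comp t1 t2 h hd).internals = t1.internals ++ t1.last :: t2.internals := by
  have h2 : (comp t1 t2 h hd).internals
      = (t1.edges.map R.head) ++ t2.internals := by
    unfold MDigraph.Trail.internals comp
    simp only
    rw [List.dropLast_append_of_ne_nil t2.nonempty, List.map_append]
  rw [h2, heads_eq_internals_last]
  simp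

end Comp
section Router

variable {k : ℕ} (φ : R.V ≃ {p : Fin k × Fin k // p.1 < p.2}) (C : Fin k → R.Trail)

/-- the intersection vertex of circles i and j -/
def vtx (i j : Fin k) (h : i ≠ j) : R.V :=
  φ.symm ⟨(min i j, max i j), min_lt_max.mpr h⟩

lemma vtx_symm {i j : Fin k} (h : i ≠ j) : vtx φ i j h = vtx φ j i h.symm := by
  unfold vtx
  congr 1
  exact Subtype.ext (by simp [min_comm, max_comm])

lemma vtx_congr {i j i' j' : Fin k} (h : i ≠ j) (hi : i = i') (hj : j = j') :
    vtx φ i j h = vtx φ i' j' (hi ▸ hj ▸ h) := by subst hi; subst hj; rfl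

lemma φ_vtx {i j : Fin k} (h : i ≠ j) :
    (φ (vtx φ i j h)).val = (min i j, max i j) := by simp [vtx]

lemma minmax_cases {α : Type*} [LinearOrder α] {a b c d : α}
    (h1 : min a b = min c d) (h2 : max a b = max c d) :
    (a = c ∧ b = d) ∨ (a = d ∧ b = c) := by
  rcases le_total a b with h | h <;> rcases le_total c d with h' | h'
  · rw [min_eq_left h, min_eq_left h'] at h1
    rw [max_eq_right h, max_eq_right h'] at h2
    exact Or.inl ⟨h1, h2⟩
  · rw [min_eq_left h, min_eq_right h'] at h1
    rw [max_eq_right h, max_eq_left h'] at h2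
    exact Or.inr ⟨h1, h2⟩
  · rw [min_eq_right h, min_eq_left h'] at h1
    rw [max_eq_left h, max_eq_right h'] at h2
    exact Or.inr ⟨h2, h1⟩
  · rw [min_eq_right h, min_eq_right h'] at h1
    rw [max_eq_left h, max_eq_left h'] at h2
    exact Or.inl ⟨h2, h1⟩

lemma vtx_inj {i j i' j' : Fin k} {h : i ≠ j} {h' : i' ≠ j'}
    (heq : vtx φ i j h = vtx φ i' j' h') :
    (i = i' ∧ j = j') ∨ (i = j' ∧ j = i') := by
  have h2 : (φ (vtx φ i j h)).val = (φ (vtx φ i' j' h')).val := by rw [heq]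
  rw [φ_vtx, φ_vtx] at h2
  exact minmax_cases (congrArg Prod.fst h2) (congrArg Prod.snd h2)

def HInt {k : ℕ} (φ : R.V ≃ {p : Fin k × Fin k // p.1 < p.2}) (C : Fin k → R.Trail) : Prop :=
  ∀ (i j : Fin k), i < j → ∀ v : R.V,
    ((v ∈ (C i).edges.map R.tail) ∧ (v ∈ (C j).edges.map R.tail)) ↔
      (φ v).val = (i, j)

lemma vtx_mem (hint : HInt φ C) {i j : Fin k} (h : i ≠ j) :
    vtx φ i j h ∈ tl (C i) ∧ vtx φ i j h ∈ tl (C j) := by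
  rcases lt_or_gt_of_ne h with hlt | hlt
  · have := (hint i j hlt (vtx φ i j h)).mpr (by
      rw [φ_vtx]
      rw [min_eq_left hlt.le, max_eq_right hlt.le])
    exact this
  · have := (hint j i hlt (vtx φ i j h)).mpr (by
      rw [φ_vtx]
      rw [min_eq_right hlt.le, max_eq_left hlt.le])
    exact ⟨this.2, this.1⟩

lemma vtx_circle (hint : HInt φ C) {i j m : Fin k} (h : i ≠ j) (hm : vtx φ i j h ∈ tl (C m)) :
    m = i ∨ m = j := by
  rcases lt_trichotomy m i with hlt | heq | hlt
  · have h2 := (hint m i hlt (vtx φ i j h)).mp ⟨hm, (vtx_mem φ C hint h).1⟩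
    rw [φ_vtx] at h2
    have h3 : m = min i j := (congrArg Prod.fst h2).symm
    rcases min_choice i j with h4 | h4 <;> rw [h4] at h3
    · exact Or.inl h3
    · exact Or.inr h3
  · exact Or.inl heq
  · have h2 := (hint i m hlt (vtx φ i j h)).mp ⟨(vtx_mem φ C hint h).1, hm⟩
    rw [φ_vtx] at h2
    have h3 : m = max i j := (congrArg Prod.snd h2).symm
    rcases max_choice i j with h4 | h4 <;> rw [h4] at h3
    · exact Or.inl h3
    · exact Or.inr h3

end Router
section Main

/-- Bundled context for the construction -/
structure Ctx (G R : MDigraph) (k : ℕ) where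
  φ : R.V ≃ {p : Fin k × Fin k // p.1 < p.2}
  C : Fin k → R.Trail
  hcirc : ∀ i, (C i).IsCircle
  hdisj : ∀ i j, i ≠ j → (C i).edges.Disjoint (C j).edges
  hint : HInt φ C
  cir : G.V → Fin 6 → Fin k
  hcir : ∀ {v m w m'}, cir v m = cir w m' → v = w ∧ m = m'
  osl : G.E → Bool
  isl : G.E → Bool
  hosl : ∀ e f, G.tail e = G.tail f → osl e = osl f → e = f
  hisl : ∀ e f, G.head e = G.head f → isl e = isl f → e = f

namespace Ctx

variable {G : MDigraph} {k : ℕ} (X : Ctx G R k)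

/-- location circles of a vertex -/
def lc (v : G.V) (s : Bool) : Fin k := X.cir v ⟨cond s 1 0, by cases s <;> simp⟩

/-- candidate connector circles of a vertex -/
def cand (v : G.V) (s b : Bool) : Fin k :=
  X.cir v ⟨2 + 2 * cond s 1 0 + cond b 1 0, by cases s <;> cases b <;> simp⟩

lemma lc_inj {v s v' s'} (h : X.lc v s = X.lc v' s') : v = v' ∧ s = s' := by
  obtain ⟨h1, h2⟩ := X.hcir h
  refine ⟨h1, ?_⟩
  have h3 := congrArg Fin.val h2
  cases s <;> cases s' <;> simp_all

lemma cand_inj {v s b v' s' b'} (h : X.cand v s b = X.cand v' s' b') :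
    v = v' ∧ s = s' ∧ b = b' := by
  obtain ⟨h1, h2⟩ := X.hcir h
  refine ⟨h1, ?_⟩
  have h3 := congrArg Fin.val h2
  cases s <;> cases s' <;> cases b <;> cases b' <;> simp_all

lemma lc_ne_cand {v s v' s' b} : X.lc v s ≠ X.cand v' s' b := by
  intro h
  obtain ⟨h1, h2⟩ := X.hcir h
  have h3 := congrArg Fin.val h2
  cases s <;> cases s' <;> cases b <;> simp_all

lemma lc_ne {v} : X.lc v false ≠ X.lc v true :=
  fun h => Bool.noConfusion (X.lc_inj h).2

/-- image vertex of a vertex of G -/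
def pv (v : G.V) : R.V := vtx X.φ (X.lc v false) (X.lc v true) X.lc_ne

/-- out-connector circle -/
def oC (v : G.V) (s : Bool) : Fin k :=
  if rdist (X.C (X.lc v s)) (X.pv v) (vtx X.φ (X.lc v s) (X.cand v s false) X.lc_ne_cand)
      < rdist (X.C (X.lc v s)) (X.pv v) (vtx X.φ (X.lc v s) (X.cand v s true) X.lc_ne_cand)
  then X.cand v s false else X.cand v s true

/-- in-connector circle -/
def iC (v : G.V) (s : Bool) : Fin k :=
  if rdist (X.C (X.lc v s)) (X.pv v) (vtx X.φ (X.lc v s) (X.cand v s false) X.lc_ne_cand)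
      < rdist (X.C (X.lc v s)) (X.pv v) (vtx X.φ (X.lc v s) (X.cand v s true) X.lc_ne_cand)
  then X.cand v s true else X.cand v s false

lemma oC_cases (v s) :
    (X.oC v s = X.cand v s false ∧ X.iC v s = X.cand v s true) ∨
    (X.oC v s = X.cand v s true ∧ X.iC v s = X.cand v s false) := by
  unfold oC iC
  split
  · exact Or.inl ⟨rfl, rfl⟩
  · exact Or.inr ⟨rfl, rfl⟩

lemma lc_ne_oC {v s v' s'} : X.lc v s ≠ X.oC v' s' := by
  rcases X.oC_cases v' s' with ⟨h, _⟩ | ⟨h, _⟩ <;> rw [h] <;> exact X.lc_ne_cand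

lemma lc_ne_iC {v s v' s'} : X.lc v s ≠ X.iC v' s' := by
  rcases X.oC_cases v' s' with ⟨_, h⟩ | ⟨_, h⟩ <;> rw [h] <;> exact X.lc_ne_cand

lemma oC_ne_iC {v s v' s'} : X.oC v s ≠ X.iC v' s' := by
  intro h
  rcases X.oC_cases v s with ⟨h1, _⟩ | ⟨h1, _⟩ <;>
    rcases X.oC_cases v' s' with ⟨h2, h2'⟩ | ⟨h2, h2'⟩ <;> rw [h1, h2'] at h
  · have := (X.cand_inj h).2.2
    simp at this
  · have hv := (X.cand_inj h).1
    have hs := (X.cand_inj h).2.1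
    subst hv; subst hs
    rw [h1] at h2
    have := (X.cand_inj h2).2.2
    simp at this
  · have hv := (X.cand_inj h).1
    have hs := (X.cand_inj h).2.1
    subst hv; subst hs
    rw [h1] at h2
    have := (X.cand_inj h2).2.2
    simp at this
  · have := (X.cand_inj h).2.2
    simp at this

lemma oC_inj {v s v' s'} (h : X.oC v s = X.oC v' s') : v = v' ∧ s = s' := by
  rcases X.oC_cases v s with ⟨h1, _⟩ | ⟨h1, _⟩ <;>
    rcases X.oC_cases v' s' with ⟨h2, _⟩ | ⟨h2, _⟩ <;> rw [h1, h2] at h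
  · exact ⟨(X.cand_inj h).1, (X.cand_inj h).2.1⟩
  · exact ⟨(X.cand_inj h).1, (X.cand_inj h).2.1⟩
  · exact ⟨(X.cand_inj h).1, (X.cand_inj h).2.1⟩
  · exact ⟨(X.cand_inj h).1, (X.cand_inj h).2.1⟩

lemma iC_inj {v s v' s'} (h : X.iC v s = X.iC v' s') : v = v' ∧ s = s' := by
  rcases X.oC_cases v s with ⟨_, h1⟩ | ⟨_, h1⟩ <;>
    rcases X.oC_cases v' s' with ⟨_, h2⟩ | ⟨_, h2⟩ <;> rw [h1, h2] at h
  · exact ⟨(X.cand_inj h).1, (X.cand_inj h).2.1⟩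
  · exact ⟨(X.cand_inj h).1, (X.cand_inj h).2.1⟩
  · exact ⟨(X.cand_inj h).1, (X.cand_inj h).2.1⟩
  · exact ⟨(X.cand_inj h).1, (X.cand_inj h).2.1⟩

lemma pv_mem_lc (v s) : X.pv v ∈ tl (X.C (X.lc v s)) := by
  cases s
  · exact (vtx_mem X.φ X.C X.hint X.lc_ne).1
  · exact (vtx_mem X.φ X.C X.hint X.lc_ne).2

/-- the chosen relative positions: out-connector strictly before in-connector -/
lemma rp_lt (v s) :
    rdist (X.C (X.lc v s)) (X.pv v) (vtx X.φ (X.lc v s) (X.oC v s) X.lc_ne_oC)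
      < rdist (X.C (X.lc v s)) (X.pv v) (vtx X.φ (X.lc v s) (X.iC v s) X.lc_ne_iC) := by
  have hinj : ∀ (c c' : Fin k) (h : X.lc v s ≠ c) (h' : X.lc v s ≠ c'),
      rdist (X.C (X.lc v s)) (X.pv v) (vtx X.φ (X.lc v s) c h) =
      rdist (X.C (X.lc v s)) (X.pv v) (vtx X.φ (X.lc v s) c' h') → c = c' := by
    intro c c' h h' heq
    have hveq := rdist_inj (X.C (X.lc v s)) (X.pv_mem_lc v s)
      (vtx_mem X.φ X.C X.hint h).1 (vtx_mem X.φ X.C X.hint h').1 heq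
    rcases vtx_inj X.φ hveq with ⟨_, h2⟩ | ⟨h2, _⟩
    · exact h2
    · exact absurd h2.symm (Ne.symm h')
  unfold oC iC
  split
  case isTrue hlt => exact hlt
  case isFalse hlt =>
    have hne : X.cand v s false ≠ X.cand v s true :=
      fun h => Bool.noConfusion (X.cand_inj h).2.2
    rcases Nat.lt_or_ge
      (rdist (X.C (X.lc v s)) (X.pv v) (vtx X.φ (X.lc v s) (X.cand v s true) X.lc_ne_cand))
      (rdist (X.C (X.lc v s)) (X.pv v) (vtx X.φ (X.lc v s) (X.cand v s false) X.lc_ne_cand))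
      with h | h
    · exact h
    · have : rdist (X.C (X.lc v s)) (X.pv v) (vtx X.φ (X.lc v s) (X.cand v s false) X.lc_ne_cand)
          = rdist (X.C (X.lc v s)) (X.pv v) (vtx X.φ (X.lc v s) (X.cand v s true) X.lc_ne_cand) := by
        omega
      exact absurd (hinj _ _ _ _ this) hne

end Ctx
end Main
namespace Ctx

variable {G : MDigraph} {k : ℕ} (X : Ctx G R k)

def γc (e : G.E) : Fin k := X.lc (G.tail e) (X.osl e)
def σc (e : G.E) : Fin k := X.oC (G.tail e) (X.osl e)
def τc (e : G.E) : Fin k := X.iC (G.head e) (X.isl e)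
def δc (e : G.E) : Fin k := X.lc (G.head e) (X.isl e)

lemma hγσ {e f : G.E} : X.γc e ≠ X.σc f := X.lc_ne_oC
lemma hγτ {e f : G.E} : X.γc e ≠ X.τc f := X.lc_ne_iC
lemma hστ {e f : G.E} : X.σc e ≠ X.τc f := X.oC_ne_iC
lemma hσδ {e f : G.E} : X.σc e ≠ X.δc f := fun h => X.lc_ne_oC h.symm
lemma hτδ {e f : G.E} : X.τc e ≠ X.δc f := fun h => X.lc_ne_iC h.symm

def J1 (e : G.E) : R.V := vtx X.φ (X.γc e) (X.σc e) X.hγσ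
def J2 (e : G.E) : R.V := vtx X.φ (X.σc e) (X.τc e) X.hστ
def J3 (e : G.E) : R.V := vtx X.φ (X.τc e) (X.δc e) X.hτδ

lemma lc_of_pv_circle {z : G.V} {m : Fin k} (hm : X.pv z ∈ tl (X.C m)) :
    ∃ s, m = X.lc z s := by
  rcases vtx_circle X.φ X.C X.hint X.lc_ne hm with h | h
  · exact ⟨false, h⟩
  · exact ⟨true, h⟩

lemma n1 (e : G.E) : X.pv (G.tail e) ≠ X.J1 e := by
  intro h
  rcases vtx_inj X.φ h with ⟨_, h2⟩ | ⟨h2, _⟩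
  · exact X.lc_ne_oC h2
  · exact X.lc_ne_oC h2

lemma n2 (e : G.E) : X.J1 e ≠ X.J2 e := by
  intro h
  rcases vtx_inj X.φ h with ⟨h2, _⟩ | ⟨h2, _⟩
  · exact X.lc_ne_oC h2
  · exact X.lc_ne_iC h2

lemma n3 (e : G.E) : X.J2 e ≠ X.J3 e := by
  intro h
  rcases vtx_inj X.φ h with ⟨h2, _⟩ | ⟨h2, _⟩
  · exact X.oC_ne_iC h2
  · exact (X.hσδ) h2

lemma n4 (e : G.E) : X.J3 e ≠ X.pv (G.head e) := by
  intro h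
  rcases vtx_inj X.φ h with ⟨h2, _⟩ | ⟨h2, _⟩
  · exact X.lc_ne_iC h2.symm
  · exact X.lc_ne_iC h2.symm

lemma pv_mem_γ (e : G.E) : X.pv (G.tail e) ∈ tl (X.C (X.γc e)) := X.pv_mem_lc _ _
lemma pv_mem_δ (e : G.E) : X.pv (G.head e) ∈ tl (X.C (X.δc e)) := X.pv_mem_lc _ _
lemma J1_mem_γ (e : G.E) : X.J1 e ∈ tl (X.C (X.γc e)) := (vtx_mem X.φ X.C X.hint _).1
lemma J1_mem_σ (e : G.E) : X.J1 e ∈ tl (X.C (X.σc e)) := (vtx_mem X.φ X.C X.hint _).2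
lemma J2_mem_σ (e : G.E) : X.J2 e ∈ tl (X.C (X.σc e)) := (vtx_mem X.φ X.C X.hint _).1
lemma J2_mem_τ (e : G.E) : X.J2 e ∈ tl (X.C (X.τc e)) := (vtx_mem X.φ X.C X.hint _).2
lemma J3_mem_τ (e : G.E) : X.J3 e ∈ tl (X.C (X.τc e)) := (vtx_mem X.φ X.C X.hint _).1
lemma J3_mem_δ (e : G.E) : X.J3 e ∈ tl (X.C (X.δc e)) := (vtx_mem X.φ X.C X.hint _).2

def A1 (e : G.E) : R.Trail :=
  arcT (X.C (X.γc e)) (X.hcirc _) (X.pv_mem_γ e) (X.J1_mem_γ e) (X.n1 e)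
def A2 (e : G.E) : R.Trail :=
  arcT (X.C (X.σc e)) (X.hcirc _) (X.J1_mem_σ e) (X.J2_mem_σ e) (X.n2 e)
def A3 (e : G.E) : R.Trail :=
  arcT (X.C (X.τc e)) (X.hcirc _) (X.J2_mem_τ e) (X.J3_mem_τ e) (X.n3 e)
def A4 (e : G.E) : R.Trail :=
  arcT (X.C (X.δc e)) (X.hcirc _) (X.J3_mem_δ e) (X.pv_mem_δ e) (X.n4 e)

lemma A1_edges (e : G.E) :
    (X.A1 e).edges = arcEdges (X.C (X.γc e)) (X.pv (G.tail e)) (X.J1 e) := rfl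
lemma A2_edges (e : G.E) :
    (X.A2 e).edges = arcEdges (X.C (X.σc e)) (X.J1 e) (X.J2 e) := rfl
lemma A3_edges (e : G.E) :
    (X.A3 e).edges = arcEdges (X.C (X.τc e)) (X.J2 e) (X.J3 e) := rfl
lemma A4_edges (e : G.E) :
    (X.A4 e).edges = arcEdges (X.C (X.δc e)) (X.J3 e) (X.pv (G.head e)) := rfl

lemma A1_first (e : G.E) : (X.A1 e).first = X.pv (G.tail e) := arcT_first _ _ _ _ _
lemma A1_last (e : G.E) : (X.A1 e).last = X.J1 e := arcT_last _ _ _ _ _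
lemma A2_first (e : G.E) : (X.A2 e).first = X.J1 e := arcT_first _ _ _ _ _
lemma A2_last (e : G.E) : (X.A2 e).last = X.J2 e := arcT_last _ _ _ _ _
lemma A3_first (e : G.E) : (X.A3 e).first = X.J2 e := arcT_first _ _ _ _ _
lemma A3_last (e : G.E) : (X.A3 e).last = X.J3 e := arcT_last _ _ _ _ _
lemma A4_first (e : G.E) : (X.A4 e).first = X.J3 e := arcT_first _ _ _ _ _
lemma A4_last (e : G.E) : (X.A4 e).last = X.pv (G.head e) := arcT_last _ _ _ _ _

/-- the crucial disjointness of an out-arc and an in-arc possibly sharing a location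
circle -/
lemma d14 (e f : G.E) : (X.A1 e).edges.Disjoint (X.A4 f).edges := by
  by_cases h : X.γc e = X.δc f
  case neg =>
    rw [X.A1_edges, X.A4_edges]
    exact arc_disjoint_of_circles (X.hdisj _ _ h)
  case pos =>
    obtain ⟨hv, hs⟩ := X.lc_inj h
    have hτ : X.iC (G.tail e) (X.osl e) = X.τc f := by
      rw [hv, hs]; rfl
    have hpw : X.pv (G.head f) = X.pv (G.tail e) := by rw [hv]
    have hC : X.C (X.δc f) = X.C (X.γc e) := by rw [h]
    have hx2 : X.J3 f = vtx X.φ (X.γc e) (X.iC (G.tail e) (X.osl e)) X.lc_ne_iC := by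
      unfold J3
      rw [vtx_symm]
      exact vtx_congr X.φ _ h.symm hτ.symm
    rw [X.A1_edges, X.A4_edges, hC, hpw, hx2]
    refine arc_disjoint_base (X.C (X.γc e)) (X.pv_mem_γ e)
      (X.J1_mem_γ e) (vtx_mem X.φ X.C X.hint _).1 (X.n1 e)
      ?_ (le_of_lt (X.rp_lt (G.tail e) (X.osl e)))
    intro hcon
    rcases vtx_inj X.φ hcon with ⟨_, h2⟩ | ⟨_, h2⟩
    · exact X.lc_ne_iC h2.symm
    · exact X.lc_ne_iC h2.symm

end Ctx
namespace Ctx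

variable {G : MDigraph} {k : ℕ} (X : Ctx G R k)

lemma d12 (e f : G.E) : (X.A1 e).edges.Disjoint (X.A2 f).edges :=
  arc_disjoint_of_circles (X.hdisj _ _ X.hγσ)
lemma d13 (e f : G.E) : (X.A1 e).edges.Disjoint (X.A3 f).edges :=
  arc_disjoint_of_circles (X.hdisj _ _ X.hγτ)
lemma d23 (e f : G.E) : (X.A2 e).edges.Disjoint (X.A3 f).edges :=
  arc_disjoint_of_circles (X.hdisj _ _ X.hστ)
lemma d24 (e f : G.E) : (X.A2 e).edges.Disjoint (X.A4 f).edges :=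
  arc_disjoint_of_circles (X.hdisj _ _ X.hσδ)
lemma d34 (e f : G.E) : (X.A3 e).edges.Disjoint (X.A4 f).edges :=
  arc_disjoint_of_circles (X.hdisj _ _ X.hτδ)

/-- first two arcs -/
def T12 (e : G.E) : R.Trail :=
  comp (X.A1 e) (X.A2 e) (by rw [X.A1_last, X.A2_first]) (X.d12 e e)

/-- first three arcs -/
def T123 (e : G.E) : R.Trail :=
  comp (X.T12 e) (X.A3 e) (by show (comp _ _ _ _).last = _; rw [comp_last, X.A3_first, X.A2_last])
    (by
      show ((X.A1 e).edges ++ (X.A2 e).edges).Disjoint _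
      rw [List.disjoint_append_left]
      exact ⟨X.d13 e e, X.d23 e e⟩)

/-- the trail assigned to an edge -/
def emapX (e : G.E) : R.Trail :=
  comp (X.T123 e) (X.A4 e) (by show (comp _ _ _ _).last = _; rw [comp_last, X.A4_first, X.A3_last])
    (by
      show (((X.A1 e).edges ++ (X.A2 e).edges) ++ (X.A3 e).edges).Disjoint _
      rw [List.disjoint_append_left, List.disjoint_append_left]
      exact ⟨⟨X.d14 e e, X.d24 e e⟩, X.d34 e e⟩)

lemma emapX_edges (e : G.E) : (X.emapX e).edges =
    ((X.A1 e).edges ++ (X.A2 e).edges) ++ (X.A3 e).edges ++ (X.A4 e).edges := rfl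

lemma emapX_first (e : G.E) : (X.emapX e).first = X.pv (G.tail e) := by
  unfold emapX
  rw [comp_first]
  unfold T123
  rw [comp_first]
  unfold T12
  rw [comp_first, X.A1_first]

lemma emapX_last (e : G.E) : (X.emapX e).last = X.pv (G.head e) := by
  unfold emapX
  rw [comp_last, X.A4_last]

lemma emapX_internals (e : G.E) : (X.emapX e).internals =
    ((X.A1 e).internals ++ X.J1 e :: (X.A2 e).internals) ++
      X.J2 e :: (X.A3 e).internals ++ X.J3 e :: (X.A4 e).internals := by
  unfold emapX
  rw [comp_internals]
  unfold T123
  rw [comp_internals, comp_last]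
  unfold T12
  rw [comp_internals, comp_last]
  rw [X.A1_last, X.A2_last, X.A3_last]

end Ctx
lemma disjoint4 {α : Type*} {a1 a2 a3 a4 b1 b2 b3 b4 : List α}
    (h11 : a1.Disjoint b1) (h12 : a1.Disjoint b2) (h13 : a1.Disjoint b3)
    (h14 : a1.Disjoint b4) (h21 : a2.Disjoint b1) (h22 : a2.Disjoint b2)
    (h23 : a2.Disjoint b3) (h24 : a2.Disjoint b4) (h31 : a3.Disjoint b1)
    (h32 : a3.Disjoint b2) (h33 : a3.Disjoint b3) (h34 : a3.Disjoint b4)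
    (h41 : a4.Disjoint b1) (h42 : a4.Disjoint b2) (h43 : a4.Disjoint b3)
    (h44 : a4.Disjoint b4) :
    (a1 ++ a2 ++ a3 ++ a4).Disjoint (b1 ++ b2 ++ b3 ++ b4) := by
  simp only [List.disjoint_append_left, List.disjoint_append_right]
  and_intros <;> assumption

namespace Ctx

variable {G : MDigraph} {k : ℕ} (X : Ctx G R k)

lemma dA1 {e f : G.E} (hef : e ≠ f) : (X.A1 e).edges.Disjoint (X.A1 f).edges := by
  by_cases h : X.γc e = X.γc f
  · obtain ⟨hv, hs⟩ := X.lc_inj h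
    exact absurd (X.hosl e f hv hs) hef
  · exact arc_disjoint_of_circles (X.hdisj _ _ h)

lemma dA2 {e f : G.E} (hef : e ≠ f) : (X.A2 e).edges.Disjoint (X.A2 f).edges := by
  by_cases h : X.σc e = X.σc f
  · obtain ⟨hv, hs⟩ := X.oC_inj h
    exact absurd (X.hosl e f hv hs) hef
  · exact arc_disjoint_of_circles (X.hdisj _ _ h)

lemma dA3 {e f : G.E} (hef : e ≠ f) : (X.A3 e).edges.Disjoint (X.A3 f).edges := by
  by_cases h : X.τc e = X.τc f
  · obtain ⟨hv, hs⟩ := X.iC_inj h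
    exact absurd (X.hisl e f hv hs) hef
  · exact arc_disjoint_of_circles (X.hdisj _ _ h)

lemma dA4 {e f : G.E} (hef : e ≠ f) : (X.A4 e).edges.Disjoint (X.A4 f).edges := by
  by_cases h : X.δc e = X.δc f
  · obtain ⟨hv, hs⟩ := X.lc_inj h
    exact absurd (X.hisl e f hv hs) hef
  · exact arc_disjoint_of_circles (X.hdisj _ _ h)

lemma emapX_disj {e f : G.E} (hef : e ≠ f) :
    (X.emapX e).edges.Disjoint (X.emapX f).edges := by
  rw [X.emapX_edges, X.emapX_edges]
  exact disjoint4 (X.dA1 hef) (X.d12 e f) (X.d13 e f) (X.d14 e f)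
    ((X.d12 f e).symm) (X.dA2 hef) (X.d23 e f) (X.d24 e f)
    ((X.d13 f e).symm) ((X.d23 f e).symm) (X.dA3 hef) (X.d34 e f)
    ((X.d14 f e).symm) ((X.d24 f e).symm) ((X.d34 f e).symm) (X.dA4 hef)

lemma pv_inj {z z' : G.V} (h : X.pv z = X.pv z') : z = z' := by
  rcases vtx_inj X.φ h with ⟨h1, _⟩ | ⟨h1, _⟩ <;> exact (X.lc_inj h1).1

lemma emapX_strong (e : G.E) (z : G.V) : X.pv z ∉ (X.emapX e).internals := by
  rw [X.emapX_internals]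
  intro hmem
  simp only [List.mem_append, List.mem_cons] at hmem
  rcases hmem with ((h | (h | h)) | (h | h)) | (h | h)
  · -- pv z internal to A1
    obtain ⟨s, hs⟩ := X.lc_of_pv_circle (arc_internal_mem_tl _ _ _ _ _ h)
    have hz : G.tail e = z := (X.lc_inj hs.symm).1.symm
    rw [← hz] at h
    exact arc_first_not_internal _ _ _ _ _ h
  · -- pv z = J1 e
    rcases vtx_inj X.φ h with ⟨_, h2⟩ | ⟨h2, _⟩
    · exact X.lc_ne_oC h2
    · exact X.lc_ne_oC h2
  · -- internal to A2
    obtain ⟨s, hs⟩ := X.lc_of_pv_circle (arc_internal_mem_tl _ _ _ _ _ h)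
    exact X.lc_ne_oC hs.symm
  · -- pv z = J2 e
    rcases vtx_inj X.φ h with ⟨h2, _⟩ | ⟨_, h2⟩
    · exact X.lc_ne_oC h2
    · exact X.lc_ne_oC h2
  · -- internal to A3
    obtain ⟨s, hs⟩ := X.lc_of_pv_circle (arc_internal_mem_tl _ _ _ _ _ h)
    exact X.lc_ne_iC hs.symm
  · -- pv z = J3 e
    rcases vtx_inj X.φ h with ⟨h2, _⟩ | ⟨_, h2⟩
    · exact X.lc_ne_iC h2
    · exact X.lc_ne_iC h2
  · -- internal to A4
    obtain ⟨s, hs⟩ := X.lc_of_pv_circle (arc_internal_mem_tl _ _ _ _ _ h)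
    have hz : G.head e = z := (X.lc_inj hs.symm).1.symm
    rw [← hz] at h
    exact arc_last_not_internal _ _ _ _ _ h

/-- the strong immersion -/
def toStrong : MDigraph.StrongImmersion G R where
  vmap := X.pv
  vinj := fun _ _ h => X.pv_inj h
  emap := X.emapX
  first_eq := X.emapX_first
  last_eq := X.emapX_last
  edisj := fun _ _ h => X.emapX_disj h
  strong := X.emapX_strong

end Ctx
/-- generic slot assignment: an injective-on-stars two-valued labelling -/
lemma slot_inj {G : MDigraph} (m : G.E → G.V)
    (hcard : ∀ v, Nat.card {e : G.E // m e = v} ≤ 2)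
    {N : ℕ} (enc : G.E ≃ Fin N) (e f : G.E) (hm : m e = m f)
    (hs : decide (∀ g, m g = m e → enc e ≤ enc g)
        = decide (∀ g, m g = m f → enc f ≤ enc g)) : e = f := by
  classical
  by_contra hef
  have hthree : ∀ c : G.E, m c = m e → c ≠ e → c ≠ f → False := by
    intro c hc hce hcf
    have h2 : 2 < Nat.card {g : G.E // m g = m e} := by
      rw [Nat.card_eq_fintype_card]
      exact Fintype.two_lt_card_iff.mpr
        ⟨⟨e, rfl⟩, ⟨f, hm.symm⟩, ⟨c, hc⟩,
          fun h => hef (Subtype.ext_iff.mp h),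
          fun h => hce (Subtype.ext_iff.mp h).symm,
          fun h => hcf (Subtype.ext_iff.mp h).symm⟩
    exact absurd (hcard (m e)) (by omega)
  simp only [decide_eq_decide] at hs
  by_cases hP : ∀ g, m g = m e → enc e ≤ enc g <;>
    by_cases hQ : ∀ g, m g = m f → enc f ≤ enc g
  · exact hef (enc.injective (le_antisymm (hP f hm.symm) (hQ e hm)))
  · exact hQ (hs.mp hP)
  · exact hP (hs.mpr hQ)
  · push_neg at hP hQ
    obtain ⟨a, ha, ha2⟩ := hP
    obtain ⟨b, hb, hb2⟩ := hQ
    have hae2 : a ≠ e := fun h => absurd (h ▸ ha2) (lt_irrefl _)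
    by_cases haf : a = f
    · have hfe : enc f < enc e := haf ▸ ha2
      by_cases hbe : b = e
      · have hef2 : enc e < enc f := hbe ▸ hb2
        exact absurd hef2 (lt_asymm hfe)
      · exact hthree b (hb.trans hm.symm) hbe (fun h => absurd (h ▸ hb2) (lt_irrefl _))
    · exact hthree a ha hae2 haf

end R12

theorem stmt12 (G : MDigraph) (hG : G.Eulerian)
    (hdeg : ∀ v : G.V,
      Nat.card {e : G.E // G.tail e = v} + Nat.card {e : G.E // G.head e = v} ≤ 4)
    (R : MDigraph) (hR : IsRouter R (6 * Nat.card G.V)) :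
    Nonempty (MDigraph.StrongImmersion G R) := by
  classical
  obtain ⟨hEul, φ, C, hcirc, hdisjC, hcov, hint⟩ := hR
  -- the six private circles of each vertex
  have hn : Fintype.card G.V = Nat.card G.V := Nat.card_eq_fintype_card.symm
  let eqv : G.V × Fin 6 ≃ Fin (6 * Nat.card G.V) :=
    (Equiv.prodCongr (Fintype.equivFinOfCardEq hn) (Equiv.refl (Fin 6))).trans
      (finProdFinEquiv.trans (finCongr (by ring)))
  -- slot functions
  let encE : G.E ≃ Fin (Fintype.card G.E) := Fintype.equivFin G.E
  have houtcard : ∀ v, Nat.card {e : G.E // G.tail e = v} ≤ 2 := by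
    intro v
    have h1 := hG v
    have h2 := hdeg v
    omega
  have hincard : ∀ v, Nat.card {e : G.E // G.head e = v} ≤ 2 := by
    intro v
    have h1 := hG v
    have h2 := hdeg v
    omega
  let X : R12.Ctx G R (6 * Nat.card G.V) :=
    { φ := φ
      C := C
      hcirc := hcirc
      hdisj := hdisjC
      hint := hint
      cir := fun v m => eqv (v, m)
      hcir := by
        intro v m w m' h
        have := eqv.injective h
        exact ⟨congrArg Prod.fst this, congrArg Prod.snd this⟩
      osl := fun e => decide (∀ g, G.tail g = G.tail e → encE e ≤ encE g)
      isl := fun e => decide (∀ g, G.head g = G.head e → encE e ≤ encE g)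
      hosl := fun e f hm hs => R12.slot_inj G.tail houtcard encE e f hm hs
      hisl := fun e f hm hs => R12.slot_inj G.head hincard encE e f hm hs }
  exact ⟨X.toStrong⟩
end
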